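/- arXiv:0909.1992 — 8 statements merged into one kernel-verified Lean document; each statement's English description precedes it below -/
import Mathlib

section
/- Let X be a Banach space, E ⊆ X a weakly compact set with no vector of maximum length. Then the norm-closed convex hull K = co̅(E) has no vector of maximum length; in particular K is not remotal from 0. -/
def IsRemotalFrom {Y : Type*} [SeminormedAddCommGroup Y] (S : Set Y) (x : Y) : Prop :=
  ∃ s ∈ S, ‖x - s‖ = sSup ((fun t => ‖x - t‖) '' S)

/-- Let `E` be a weakly compact subset of a Banach space `X` with no
vector of maximum length. Then the norm-closed convex hull `K = co̅(E)` has no vector of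
maximum length; in particular `K` is not remotal from `0`. -/
theorem stmt3 {X : Type*} [NormedAddCommGroup X] [NormedSpace ℝ X] [CompleteSpace X]
    (E : Set X) (hEne : E.Nonempty)
    (hEwc : IsCompact ((toWeakSpace ℝ X) '' E))
    (hno : ∀ e ∈ E, ‖e‖ < sSup ((fun e => ‖e‖) '' E)) :
    (∀ k ∈ closure (convexHull ℝ E),
        ‖k‖ < sSup ((fun e => ‖e‖) '' E)) ∧
      ¬ IsRemotalFrom (closure (convexHull ℝ E)) (0 : X) := by
  set M := sSup ((fun e => ‖e‖) '' E) with hM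
  set K := closure (convexHull ℝ E) with hK
  obtain ⟨e₀, he₀⟩ := id hEne
  have hMpos : 0 < M := lt_of_le_of_lt (norm_nonneg e₀) (hno e₀ he₀)
  -- every element of K has norm ≤ M
  have hle : ∀ k ∈ K, ‖k‖ ≤ M := by
    intro k hk
    have hsub : K ⊆ Metric.closedBall 0 M := by
      refine closure_minimal (convexHull_min ?_ (convex_closedBall 0 M)) Metric.isClosed_closedBall
      intro e he
      simpa [Metric.mem_closedBall, dist_zero_right] using (hno e he).le
    simpa [Metric.mem_closedBall, dist_zero_right] using hsub hk
  have hEK : E ⊆ K := subset_closure.trans' (subset_convexHull ℝ E)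
  have part1 : ∀ k ∈ K, ‖k‖ < M := by
    intro k hk
    rcases lt_or_ge ‖k‖ M with h | h
    · exact h
    exfalso
    have hkM : ‖k‖ = M := le_antisymm (hle k hk) h
    have hk0 : k ≠ 0 := by rintro rfl; rw [norm_zero] at hkM; exact hMpos.ne hkM
    obtain ⟨g, hg1, hgk⟩ := exists_dual_vector ℝ k (norm_ne_zero_iff.mpr hk0)
    -- g is continuous on the weak space
    have hGcont : Continuous fun w : WeakSpace ℝ X => g ((toWeakSpace ℝ X).symm w) :=
      WeakBilin.eval_continuous ((topDualPairing ℝ X).flip) g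
    obtain ⟨we, hwe, hmax⟩ := hEwc.exists_isMaxOn (hEne.image _) hGcont.continuousOn
    obtain ⟨e, heE, rfl⟩ := hwe
    have hmax' : ∀ t ∈ E, g t ≤ g e := by
      intro t ht
      have := hmax (Set.mem_image_of_mem _ ht)
      simpa using this
    -- g ≤ g e on K
    have hSK : K ⊆ {x | g x ≤ g e} := by
      refine closure_minimal (convexHull_min hmax' (convex_halfSpace_le ?_ _)) ?_
      · exact ⟨fun x y => g.map_add x y, fun c x => g.map_smul c x⟩
      · exact isClosed_le g.continuous continuous_const
    have h1 : M ≤ g e := by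
      have := hSK hk
      rw [Set.mem_setOf_eq, hgk, hkM] at this
      exact this
    have h2 : g e ≤ ‖e‖ := by
      calc g e ≤ ‖g e‖ := le_abs_self _
        _ ≤ ‖g‖ * ‖e‖ := g.le_opNorm e
        _ = ‖e‖ := by rw [hg1, one_mul]
    exact absurd (h1.trans_lt (h2.trans_lt (hno e heE))) (lt_irrefl M)
  refine ⟨part1, ?_⟩
  rintro ⟨s, hsK, hs⟩
  have himg : (fun t => ‖(0:X) - t‖) '' K = (fun t => ‖t‖) '' K := by
    simp
  have hbdd : BddAbove ((fun t => ‖t‖) '' K) := ⟨M, by rintro - ⟨t, ht, rfl⟩; exact hle t ht⟩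
  have hsup : sSup ((fun t => ‖(0:X) - t‖) '' K) = M := by
    rw [himg]
    apply le_antisymm
    · exact csSup_le ((hEne.mono hEK).image _) (by rintro - ⟨t, ht, rfl⟩; exact hle t ht)
    · exact csSup_le_csSup hbdd (hEne.image _) (Set.image_mono hEK)
  rw [hsup, zero_sub, norm_neg] at hs
  exact absurd (part1 s hsK) (by rw [hs]; exact lt_irrefl M)
end

section
/- Let X be a Banach space failing the Schur property, and let (xₙ) be a sequence of unit vectors converging weakly to 0. Then the closed convex hull K = co̅({(n/(n+1))·xₙ : n ∈ ℕ} ∪ {0}) is a closed bounded convex set that is not remotal from 0. -/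
open Filter

/-- A Banach space has the Schur property if every weakly convergent sequence is norm
convergent. -/
def SchurProperty (X : Type*) [NormedAddCommGroup X] [NormedSpace ℝ X] : Prop :=
  ∀ (u : ℕ → X) (x : X),
    (∀ f : X →L[ℝ] ℝ, Tendsto (fun n => f (u n)) atTop (nhds (f x))) →
    Tendsto u atTop (nhds x)

/-- Let `X` be a Banach space failing the Schur property and `(xₙ)` a
sequence of unit vectors converging weakly to `0`. Then the closed convex hull
`K = co̅({(n/(n+1)) • xₙ : n ∈ ℕ} ∪ {0})` is a closed bounded convex set that is not
remotal from `0`. -/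
theorem stmt4 {X : Type*} [NormedAddCommGroup X] [NormedSpace ℝ X] [CompleteSpace X]
    (hSchur : ¬ SchurProperty X)
    (x : ℕ → X) (hx : ∀ n, ‖x n‖ = 1)
    (hweak : ∀ f : X →L[ℝ] ℝ, Tendsto (fun n => f (x n)) atTop (nhds 0)) :
    IsClosed (closure (convexHull ℝ
        ((Set.range fun n : ℕ => ((n : ℝ) / (n + 1)) • x n) ∪ {0}))) ∧
      Bornology.IsBounded (closure (convexHull ℝ
        ((Set.range fun n : ℕ => ((n : ℝ) / (n + 1)) • x n) ∪ {0}))) ∧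
      Convex ℝ (closure (convexHull ℝ
        ((Set.range fun n : ℕ => ((n : ℝ) / (n + 1)) • x n) ∪ {0}))) ∧
      ¬ IsRemotalFrom (closure (convexHull ℝ
        ((Set.range fun n : ℕ => ((n : ℝ) / (n + 1)) • x n) ∪ {0}))) (0 : X) := by
  set S : Set X := (Set.range fun n : ℕ => ((n : ℝ) / (n + 1)) • x n) ∪ {0} with hS
  set K := closure (convexHull ℝ S) with hK
  have hfrac : ∀ n : ℕ, (0:ℝ) ≤ (n : ℝ) / (n + 1) := fun n =>
    div_nonneg (Nat.cast_nonneg n) (by positivity)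
  have hfrac1 : ∀ n : ℕ, (n : ℝ) / (n + 1) ≤ 1 := fun n =>
    div_le_one_of_le₀ (by linarith [Nat.cast_nonneg (α := ℝ) n]) (by positivity)
  have hnormgen : ∀ n : ℕ, ‖((n : ℝ) / (n + 1)) • x n‖ = (n : ℝ) / (n + 1) := by
    intro n
    rw [norm_smul, hx, mul_one, Real.norm_of_nonneg (hfrac n)]
  have hSball : S ⊆ Metric.closedBall (0 : X) 1 := by
    rintro y (⟨n, rfl⟩ | rfl)
    · simpa [mem_closedBall_zero_iff, hnormgen n] using hfrac1 n
    · simp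
  have hKball : K ⊆ Metric.closedBall (0 : X) 1 :=
    closure_minimal (convexHull_min hSball (convex_closedBall _ _)) Metric.isClosed_closedBall
  -- every element of K has norm < 1
  have hlt : ∀ t ∈ K, ‖t‖ < 1 := by
    intro t ht
    by_contra h
    push_neg at h
    have ht1 : ‖t‖ = 1 := le_antisymm (mem_closedBall_zero_iff.mp (hKball ht)) h
    have htne : t ≠ 0 := by intro h0; rw [h0] at ht1; simp at ht1
    obtain ⟨f, hf1, hft⟩ := exists_dual_vector ℝ t (norm_ne_zero_iff.mpr htne)
    rw [ht1] at hft
    have hft' : f t = 1 := by exact_mod_cast hft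
    obtain ⟨N, hN⟩ := (Metric.tendsto_atTop.mp (hweak f) (1/2) (by norm_num))
    set M : ℝ := max ((N : ℝ) / (N + 1)) (1/2) with hM
    have hMlt : M < 1 := by
      apply max_lt _ (by norm_num)
      rw [div_lt_one (by positivity)]; linarith
    have hfx : ∀ n, |f (x n)| ≤ 1 := by
      intro n
      calc |f (x n)| = ‖f (x n)‖ := rfl
        _ ≤ ‖f‖ * ‖x n‖ := f.le_opNorm _
        _ = 1 := by rw [hf1, hx, one_mul]
    have hgen : S ⊆ f ⁻¹' Set.Iic M := by
      rintro y (⟨n, rfl⟩ | rfl)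
      · simp only [Set.mem_preimage, map_smul, smul_eq_mul, Set.mem_Iic]
        rcases le_or_gt (N : ℝ) (n : ℝ) with hn | hn
        · have hNn : N ≤ n := Nat.cast_le.mp hn
          have h2 : |f (x n)| < 1/2 := by simpa [Real.dist_eq] using hN n hNn
          calc ((n:ℝ)/(n+1)) * f (x n) ≤ ((n:ℝ)/(n+1)) * |f (x n)| :=
                mul_le_mul_of_nonneg_left (le_abs_self _) (hfrac n)
            _ ≤ 1 * (1/2) := mul_le_mul (hfrac1 n) h2.le (abs_nonneg _) one_pos.le
            _ ≤ M := by rw [one_mul]; exact le_max_right _ _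
        · have hnN : (n:ℝ)/(n+1) ≤ (N:ℝ)/(N+1) := by
            rw [div_le_div_iff₀ (by positivity) (by positivity)]
            nlinarith [Nat.cast_nonneg (α := ℝ) n]
          calc ((n:ℝ)/(n+1)) * f (x n) ≤ ((n:ℝ)/(n+1)) * |f (x n)| :=
                mul_le_mul_of_nonneg_left (le_abs_self _) (hfrac n)
            _ ≤ ((N:ℝ)/(N+1)) * 1 := mul_le_mul hnN (hfx n) (abs_nonneg _)
                (by positivity)
            _ ≤ M := by rw [mul_one]; exact le_max_left _ _
      · simp only [Set.mem_preimage, map_zero, Set.mem_Iic]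
        exact le_trans (by norm_num) (le_max_right ((N : ℝ) / (N + 1)) (1/2))
    have hKM : K ⊆ f ⁻¹' Set.Iic M := by
      apply closure_minimal (convexHull_min hgen _) (isClosed_Iic.preimage f.continuous)
      exact (convex_Iic M).linear_preimage (f : X →ₗ[ℝ] ℝ)
    have := hKM ht
    simp only [Set.mem_preimage, Set.mem_Iic, hft'] at this
    linarith
  -- 0 ∈ K
  have h0K : (0 : X) ∈ K := subset_closure (subset_convexHull ℝ S (Or.inr rfl))
  have hmem : ∀ n : ℕ, ((n : ℝ) / (n + 1)) • x n ∈ K := fun n =>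
    subset_closure (subset_convexHull ℝ S (Or.inl ⟨n, rfl⟩))
  have hbdd : BddAbove ((fun t => ‖(0:X) - t‖) '' K) := by
    refine ⟨1, ?_⟩
    rintro r ⟨t, htK, rfl⟩
    simpa [norm_sub_rev] using mem_closedBall_zero_iff.mp (hKball htK)
  have hsup : sSup ((fun t => ‖(0:X) - t‖) '' K) = 1 := by
    apply le_antisymm
    · apply csSup_le ((Set.nonempty_of_mem h0K).image _)
      rintro r ⟨t, htK, rfl⟩
      simpa [norm_sub_rev] using mem_closedBall_zero_iff.mp (hKball htK)
    · refine le_of_tendsto' (tendsto_natCast_div_add_atTop (1:ℝ)) fun n => ?_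
      have : ((n:ℝ)/(n+1)) = ‖(0:X) - ((n : ℝ) / (n + 1)) • x n‖ := by
        rw [zero_sub, norm_neg, hnormgen]
      rw [this]
      simpa using le_csSup hbdd ⟨_, hmem n, rfl⟩
  refine ⟨isClosed_closure, Metric.isBounded_closedBall.subset hKball,
    (convex_convexHull ℝ S).closure, ?_⟩
  rintro ⟨s, hsK, hs⟩
  rw [hsup, zero_sub, norm_neg] at hs
  exact absurd hs (ne_of_lt (hlt s hsK))
end

section
/- Let X = ℝ ⊕_∞ ℓ², the direct sum with the max norm, let (eₙ) be the canonical orthonormal basis of ℓ², and let E = {((n/(n+1)), (n/(n+1))·eₙ) : n ∈ ℕ}. Then E is a norm-closed bounded set that is not remotal from 0, while its closed convex hull co̅(E) is remotal from 0 (indeed (1,0) ∈ co̅(E) and ‖(1,0)‖ = 1 = sup{‖e‖ : e ∈ E}). -/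
noncomputable section

/-- The set `E = {((n/(n+1)), (n/(n+1))·eₙ) : n ∈ ℕ}` in `ℝ ⊕_∞ ℓ²` (the product carries
the max norm), where `eₙ` is the canonical basis of `ℓ²`. -/
def stmt6E : Set (ℝ × lp (fun _ : ℕ => ℝ) 2) :=
  Set.range fun n : ℕ =>
    (((n : ℝ) / (n + 1)), ((n : ℝ) / (n + 1)) • lp.single 2 n (1 : ℝ))

namespace Stmt6Aux

abbrev X := ℝ × lp (fun _ : ℕ => ℝ) 2

def e (n : ℕ) : lp (fun _ : ℕ => ℝ) 2 := lp.single 2 n (1 : ℝ)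

def a (n : ℕ) : ℝ := (n : ℝ) / (n + 1)

def p (n : ℕ) : X := (a n, a n • e n)

lemma E_eq : stmt6E = Set.range p := rfl

lemma a_nonneg (n : ℕ) : 0 ≤ a n := div_nonneg (Nat.cast_nonneg n) (by positivity)

lemma a_lt_one (n : ℕ) : a n < 1 := by
  rw [a, div_lt_one (by positivity)]; linarith

lemma a_le_one (n : ℕ) : a n ≤ 1 := (a_lt_one n).le

lemma a_eq (n : ℕ) : a n = 1 - 1 / (n + 1) := by
  rw [a]; field_simp; ring

lemma a_mono : Monotone a := by
  intro m n h
  rw [a_eq, a_eq]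
  have h1 : (0:ℝ) < m + 1 := by positivity
  have h2 : (m:ℝ) + 1 ≤ (n:ℝ) + 1 := by
    have := (Nat.cast_le (α := ℝ)).mpr h; linarith
  have := one_div_le_one_div_of_le h1 h2
  linarith

lemma a_half {n : ℕ} (h : 1 ≤ n) : (1:ℝ)/2 ≤ a n := by
  have : a 1 = 1/2 := by norm_num [a]
  rw [← this]; exact a_mono h

lemma norm_e (n : ℕ) : ‖e n‖ = 1 := by
  simpa [e] using lp.norm_single (p := 2) (by norm_num)
    (Pi.single n (1:ℝ) : ∀ _ : ℕ, ℝ) n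

lemma orth_e : Orthonormal ℝ e := by
  rw [orthonormal_iff_ite]
  intro i j
  simp [e, lp.inner_single_left, lp.single_apply, Pi.single_apply]

lemma norm_p (n : ℕ) : ‖p n‖ = a n := by
  simp [p, Prod.norm_def, norm_smul, norm_e, abs_of_nonneg (a_nonneg n)]

lemma sep' {n m : ℕ} (h : m < n) : (1:ℝ)/2 ≤ dist (p n) (p m) := by
  have key := lp.norm_apply_le_norm (p := 2) (by norm_num) ((p n).2 - (p m).2) n
  have hval : ((p n).2 - (p m).2 : lp (fun _ : ℕ => ℝ) 2) n = a n := by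
    have h2 : ((p n).2 - (p m).2 : lp (fun _ : ℕ => ℝ) 2) n = (p n).2 n - (p m).2 n := by
      rw [lp.coeFn_sub]; rfl
    rw [h2]
    simp [p, e, lp.coeFn_smul, lp.single_apply, Pi.single_apply, h.ne']
  rw [hval, Real.norm_eq_abs] at key
  have h1 : a n ≤ ‖(p n).2 - (p m).2‖ := le_trans (le_abs_self _) key
  have h2 : ‖(p n).2 - (p m).2‖ ≤ dist (p n) (p m) := by
    rw [Prod.dist_eq, dist_eq_norm (p n).2]
    exact le_max_right _ _
  have h3 : (1:ℝ)/2 ≤ a n := a_half (Nat.one_le_iff_ne_zero.mpr (by omega))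
  linarith

lemma sep {n m : ℕ} (h : n ≠ m) : (1:ℝ)/2 ≤ dist (p n) (p m) := by
  rcases lt_or_gt_of_ne h with h' | h'
  · rw [dist_comm]; exact sep' h'
  · exact sep' h'

lemma closed_E : IsClosed stmt6E := by
  refine isClosed_of_closure_subset ?_
  intro x hx
  rw [Metric.mem_closure_iff] at hx
  obtain ⟨y, hyE, hy⟩ := hx (1/4) (by norm_num)
  have hsmall : ∀ ε > (0:ℝ), dist x y < ε := by
    intro ε hε
    rcases lt_or_ge (1/4 : ℝ) ε with h | h
    · linarith
    · obtain ⟨z, hzE, hz⟩ := hx ε hε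
      have heq : y = z := by
        by_contra hne
        rw [E_eq] at hyE hzE
        obtain ⟨n, rfl⟩ := hyE
        obtain ⟨m, rfl⟩ := hzE
        have hnm : n ≠ m := fun hh => hne (by rw [hh])
        have h1 := sep hnm
        have h2 : dist (p n) (p m) ≤ dist (p n) x + dist x (p m) := dist_triangle _ _ _
        rw [dist_comm (p n) x] at h2
        linarith
      rw [heq]; exact hz
  have h0 : dist x y = 0 := by
    by_contra h
    have hpos : 0 < dist x y := lt_of_le_of_ne dist_nonneg (Ne.symm h)
    exact absurd (hsmall _ hpos) (lt_irrefl _)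
  rw [dist_eq_zero] at h0
  rw [h0]; exact hyE

lemma subset_ball : stmt6E ⊆ Metric.closedBall 0 1 := by
  rw [E_eq]
  rintro x ⟨n, rfl⟩
  rw [Metric.mem_closedBall, dist_zero_right, norm_p]
  exact a_le_one n

lemma bounded_E : Bornology.IsBounded stmt6E :=
  (Metric.isBounded_closedBall (x := (0 : X)) (r := 1)).subset subset_ball

lemma sup_range_a : sSup (Set.range a) = 1 := by
  have hbdd : BddAbove (Set.range a) := ⟨1, by rintro y ⟨n, rfl⟩; exact a_le_one n⟩
  refine le_antisymm (csSup_le ⟨a 0, 0, rfl⟩ (by rintro y ⟨n, rfl⟩; exact a_le_one n)) ?_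
  have htend : Filter.Tendsto a Filter.atTop (nhds 1) := by
    show Filter.Tendsto (fun n : ℕ => (n : ℝ) / (n + 1)) Filter.atTop (nhds 1)
    simpa using tendsto_natCast_div_add_atTop (𝕜 := ℝ) 1
  exact le_of_tendsto' htend fun n => le_csSup hbdd ⟨n, rfl⟩

lemma img_eq : (fun t => ‖(0 : X) - t‖) '' stmt6E = Set.range a := by
  rw [E_eq, ← Set.range_comp]
  have h : ((fun t => ‖(0 : X) - t‖) ∘ p) = a := by
    funext n; simp [Function.comp, norm_p]
  rw [h]

lemma img_eq' : (fun t : X => ‖t‖) '' stmt6E = Set.range a := by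
  rw [E_eq, ← Set.range_comp]
  have h : ((fun t : X => ‖t‖) ∘ p) = a := by
    funext n; simp [Function.comp, norm_p]
  rw [h]

lemma not_remotal : ¬ IsRemotalFrom stmt6E (0 : X) := by
  rintro ⟨s, hs, heq⟩
  rw [img_eq, sup_range_a] at heq
  rw [E_eq] at hs
  obtain ⟨n, rfl⟩ := hs
  rw [zero_sub, norm_neg, norm_p] at heq
  exact absurd heq (ne_of_lt (a_lt_one n))

lemma norm_sum_sq (s : Finset ℕ) (c : ℕ → ℝ) :
    ‖∑ i ∈ s, c i • e i‖ ^ 2 = ∑ i ∈ s, (c i) ^ 2 := by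
  rw [← real_inner_self_eq_norm_sq, orth_e.inner_sum c c s]
  simp [sq]

lemma mem_cl : ((1 : ℝ), (0 : lp (fun _ : ℕ => ℝ) 2)) ∈ closure (convexHull ℝ stmt6E) := by
  rw [Metric.mem_closure_iff]
  intro ε hε
  obtain ⟨N, hN⟩ := exists_nat_one_div_lt (show (0:ℝ) < ε ^ 2 by positivity)
  set k := N + 1 with hk
  have hkpos : (0:ℝ) < k := by positivity
  set s := Finset.Ico k (2 * k) with hs
  have hcard : s.card = k := by rw [hs, Nat.card_Ico]; omega
  set w : ℕ → ℝ := fun _ => 1 / k with hw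
  have hsumw : ∑ i ∈ s, w i = 1 := by
    rw [hw]; rw [Finset.sum_const, hcard]; rw [nsmul_eq_mul]; field_simp
  set q : X := ∑ i ∈ s, w i • p i with hq
  have hmem : q ∈ convexHull ℝ stmt6E := by
    have := Finset.centerMass_mem_convexHull (s := stmt6E) s (w := w)
      (fun i _ => by rw [hw]; positivity) (by rw [hsumw]; norm_num)
      (z := p) (fun i _ => by rw [E_eq]; exact ⟨i, rfl⟩)
    rwa [Finset.centerMass_eq_of_sum_1 _ _ hsumw] at this
  refine ⟨q, hmem, ?_⟩
  -- compute components of q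
  have hq1 : q.1 = ∑ i ∈ s, w i * a i := by
    rw [hq, Prod.fst_sum]
    exact Finset.sum_congr rfl fun i _ => rfl
  have hq2 : q.2 = ∑ i ∈ s, (w i * a i) • e i := by
    rw [hq, Prod.snd_sum]
    refine Finset.sum_congr rfl fun i _ => ?_
    show w i • (a i • e i) = (w i * a i) • e i
    rw [smul_smul]
  have hwa_le : ∀ i ∈ s, w i * a i ≤ 1 / k := fun i _ => by
    rw [hw]
    have := a_le_one i
    have h1 : (0:ℝ) ≤ 1 / k := by positivity
    calc 1 / (k:ℝ) * a i ≤ 1 / k * 1 := by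
          exact mul_le_mul_of_nonneg_left (a_le_one i) h1
      _ = 1 / k := by ring
  have hwa_nonneg : ∀ i, 0 ≤ w i * a i := fun i => by
    rw [hw]; exact mul_nonneg (by positivity) (a_nonneg i)
  -- bound on first coordinate
  have hS_le : q.1 ≤ 1 := by
    rw [hq1]
    calc ∑ i ∈ s, w i * a i ≤ ∑ i ∈ s, w i * 1 := by
          refine Finset.sum_le_sum fun i hi => ?_
          exact mul_le_mul_of_nonneg_left (a_le_one i) (by rw [hw]; positivity)
      _ = 1 := by simpa using hsumw
  have hS_ge : a k ≤ q.1 := by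
    rw [hq1]
    have : ∑ i ∈ s, w i * a k ≤ ∑ i ∈ s, w i * a i := by
      refine Finset.sum_le_sum fun i hi => ?_
      refine mul_le_mul_of_nonneg_left (a_mono ?_) (by rw [hw]; positivity)
      exact (Finset.mem_Ico.mp hi).1
    calc a k = (∑ i ∈ s, w i) * a k := by rw [hsumw, one_mul]
      _ = ∑ i ∈ s, w i * a k := by rw [Finset.sum_mul]
      _ ≤ ∑ i ∈ s, w i * a i := this
  have hfirst : |1 - q.1| ≤ 1 / k := by
    rw [abs_of_nonneg (by linarith)]
    have := a_eq k
    have hk1 : (1:ℝ) / (k + 1) ≤ 1 / k := by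
      apply one_div_le_one_div_of_le hkpos; linarith
    have : 1 - q.1 ≤ 1 / ((k:ℝ) + 1) := by rw [a_eq] at hS_ge; linarith
    linarith
  -- bound on second coordinate
  have hsecond_sq : ‖q.2‖ ^ 2 ≤ 1 / k := by
    rw [hq2, norm_sum_sq]
    calc ∑ i ∈ s, (w i * a i) ^ 2 ≤ ∑ i ∈ s, (1 / (k:ℝ)) ^ 2 := by
          refine Finset.sum_le_sum fun i hi => ?_
          exact pow_le_pow_left₀ (hwa_nonneg i) (hwa_le i hi) 2
      _ = k * (1 / (k:ℝ)) ^ 2 := by rw [Finset.sum_const, hcard]; push_cast; ring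
      _ = 1 / k := by field_simp
  have hsecond : ‖q.2‖ ≤ Real.sqrt (1 / k) := by
    exact (Real.le_sqrt (norm_nonneg _) (by positivity)).mpr hsecond_sq
  have hk_le_one : (1:ℝ) / k ≤ 1 := by
    rw [div_le_one hkpos]; exact_mod_cast Nat.one_le_iff_ne_zero.mpr (by omega)
  have hfirst' : |1 - q.1| ≤ Real.sqrt (1 / k) := by
    refine hfirst.trans ?_
    rw [Real.le_sqrt (by positivity) (by positivity)]
    calc ((1:ℝ)/k) ^ 2 = (1/k) * (1/k) := sq _
      _ ≤ 1 * (1/k) := mul_le_mul_of_nonneg_right hk_le_one (by positivity)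
      _ = 1/k := one_mul _
  have hsqrt_lt : Real.sqrt (1 / k) < ε := by
    rw [Real.sqrt_lt' hε]
    have : (1:ℝ) / k = 1 / ((N:ℝ) + 1) := by rw [hk]; push_cast; ring
    rw [this]; exact hN
  rw [Prod.dist_eq]
  have hd1 : dist (1:ℝ) q.1 = |1 - q.1| := Real.dist_eq 1 q.1
  have hd2 : dist (0 : lp (fun _ : ℕ => ℝ) 2) q.2 = ‖q.2‖ := by
    rw [dist_comm, dist_zero_right]
  rw [hd1, hd2]
  exact max_lt (lt_of_le_of_lt hfirst' hsqrt_lt) (lt_of_le_of_lt hsecond hsqrt_lt)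

lemma norm_one_zero : ‖(((1 : ℝ), (0 : lp (fun _ : ℕ => ℝ) 2)) : X)‖ = 1 := by
  simp [Prod.norm_def]

lemma remotal_cl : IsRemotalFrom (closure (convexHull ℝ stmt6E)) (0 : X) := by
  refine ⟨((1 : ℝ), (0 : lp (fun _ : ℕ => ℝ) 2)), mem_cl, ?_⟩
  have h1 : ‖(0 : X) - ((1 : ℝ), (0 : lp (fun _ : ℕ => ℝ) 2))‖ = 1 := by
    rw [zero_sub, norm_neg, norm_one_zero]
  rw [h1]
  symm
  apply IsGreatest.csSup_eq
  constructor
  · exact ⟨((1 : ℝ), (0 : lp (fun _ : ℕ => ℝ) 2)), mem_cl, h1⟩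
  · rintro y ⟨x, hx, rfl⟩
    have hsub : closure (convexHull ℝ stmt6E) ⊆ Metric.closedBall 0 1 :=
      closure_minimal (convexHull_min subset_ball (convex_closedBall 0 1))
        Metric.isClosed_closedBall
    have hb := hsub hx
    rw [Metric.mem_closedBall, dist_zero_right] at hb
    simpa [zero_sub, norm_neg] using hb

end Stmt6Aux

/-- In `X = ℝ ⊕_∞ ℓ²`, the set `E` is norm-closed and bounded but not
remotal from `0`, while its closed convex hull is remotal from `0`: indeed
`(1,0) ∈ co̅(E)` and `‖(1,0)‖ = 1 = sup {‖e‖ : e ∈ E}`. -/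
theorem stmt6 :
    IsClosed stmt6E ∧ Bornology.IsBounded stmt6E ∧
      ¬ IsRemotalFrom stmt6E (0 : ℝ × lp (fun _ : ℕ => ℝ) 2) ∧
      ((1 : ℝ), (0 : lp (fun _ : ℕ => ℝ) 2)) ∈ closure (convexHull ℝ stmt6E) ∧
      ‖(((1 : ℝ), (0 : lp (fun _ : ℕ => ℝ) 2)))‖ = 1 ∧
      sSup ((fun e => ‖e‖) '' stmt6E) = 1 ∧
      IsRemotalFrom (closure (convexHull ℝ stmt6E)) (0 : ℝ × lp (fun _ : ℕ => ℝ) 2) := by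
  refine ⟨Stmt6Aux.closed_E, Stmt6Aux.bounded_E, Stmt6Aux.not_remotal, Stmt6Aux.mem_cl,
    Stmt6Aux.norm_one_zero, ?_, Stmt6Aux.remotal_cl⟩
  rw [Stmt6Aux.img_eq', Stmt6Aux.sup_range_a]

end
end

section
/- Let X be a Banach space, K ⊆ X a closed bounded convex set, and x ∈ X. If some point of F(x, K) is a strongly exposed point of K, and E ⊆ X is a set with K = co̅(E), then F(x, E) is nonempty, i.e., E is remotal from x. -/
open Filter

/-- The set of farthest points of `S` from `x`. -/
def farthestPts {Y : Type*} [SeminormedAddCommGroup Y] (x : Y) (S : Set Y) : Set Y :=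
  {s ∈ S | ‖x - s‖ = sSup ((fun t => ‖x - t‖) '' S)}

/-- `k₀` is a strongly exposed point of `K` : some `f ∈ X*` attains its supremum over `K`
exactly at `k₀`, and every sequence in `K` along which `f` tends to that supremum converges
in norm to `k₀`. -/
def IsStronglyExposedPt {X : Type*} [NormedAddCommGroup X] [NormedSpace ℝ X]
    (K : Set X) (k₀ : X) : Prop :=
  k₀ ∈ K ∧ ∃ f : X →L[ℝ] ℝ, f k₀ = sSup ((fun k => f k) '' K) ∧
    ∀ u : ℕ → X, (∀ n, u n ∈ K) →
      Tendsto (fun n => f (u n)) atTop (nhds (sSup ((fun k => f k) '' K))) →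
      Tendsto u atTop (nhds k₀)

/-- A continuous convex function on the whole space is bounded on the closed convex hull of a
set by its supremum on the set. -/
lemma aux_le_sSup {X : Type*} [NormedAddCommGroup X] [NormedSpace ℝ X]
    {E : Set X} {g : X → ℝ} (hg : ConvexOn ℝ Set.univ g) (hc : Continuous g)
    (hbdd : BddAbove (g '' E)) :
    ∀ k ∈ closure (convexHull ℝ E), g k ≤ sSup (g '' E) := by
  intro k hk
  have hconv : Convex ℝ {y : X | g y ≤ sSup (g '' E)} := by
    have := hg.convex_le (sSup (g '' E))
    simpa using this
  have hsub : closure (convexHull ℝ E) ⊆ {y : X | g y ≤ sSup (g '' E)} := by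
    apply closure_minimal
    · apply convexHull_min _ hconv
      intro e he
      exact le_csSup hbdd ⟨e, he, rfl⟩
    · exact IsClosed.preimage hc isClosed_Iic
  exact hsub hk

/-- Let `K` be a closed bounded convex subset of a Banach space `X` and
`x ∈ X`. If some point of `F(x, K)` is a strongly exposed point of `K`, and `E` is a
(norm-closed) set with `K = co̅(E)`, then `F(x, E)` is nonempty, i.e. `E` is remotal
from `x`. -/
theorem stmt8 {X : Type*} [NormedAddCommGroup X] [NormedSpace ℝ X] [CompleteSpace X]
    (K : Set X) (hKcl : IsClosed K) (hKbdd : Bornology.IsBounded K) (hKcvx : Convex ℝ K)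
    (x : X) (k₀ : X) (hk₀ : k₀ ∈ farthestPts x K) (hse : IsStronglyExposedPt K k₀)
    (E : Set X) (hEcl : IsClosed E) (hKE : K = closure (convexHull ℝ E)) :
    (farthestPts x E).Nonempty := by
  obtain ⟨hk₀K, hk₀far⟩ := hk₀
  obtain ⟨_, f, hfeq, hfseq⟩ := hse
  -- E ⊆ K
  have hEK : E ⊆ K := by
    rw [hKE]
    exact fun e he => subset_closure (subset_convexHull ℝ E he)
  -- E is nonempty
  have hEne : E.Nonempty := by
    have : (closure (convexHull ℝ E)).Nonempty := ⟨k₀, hKE ▸ hk₀K⟩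
    rw [closure_nonempty_iff] at this
    exact convexHull_nonempty_iff.1 this
  obtain ⟨C, hC⟩ := Bornology.IsBounded.exists_norm_le hKbdd
  -- bounds
  have hbddK : BddAbove ((fun t => ‖x - t‖) '' K) := by
    refine ⟨‖x‖ + C, ?_⟩
    rintro _ ⟨k, hk, rfl⟩
    calc ‖x - k‖ ≤ ‖x‖ + ‖k‖ := norm_sub_le _ _
    _ ≤ ‖x‖ + C := by linarith [hC k hk]
  have hbddE : BddAbove ((fun t => ‖x - t‖) '' E) :=
    hbddK.mono (Set.image_mono hEK)
  have hbddfK : BddAbove ((fun k => f k) '' K) := by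
    refine ⟨‖f‖ * C, ?_⟩
    rintro _ ⟨k, hk, rfl⟩
    calc f k ≤ ‖f k‖ := le_abs_self _
    _ ≤ ‖f‖ * ‖k‖ := f.le_opNorm k
    _ ≤ ‖f‖ * C := by
        have := hC k hk
        nlinarith [norm_nonneg f]
  have hbddfE : BddAbove ((fun k => f k) '' E) := hbddfK.mono (Set.image_mono hEK)
  -- f is convex and continuous
  have hfconv : ConvexOn ℝ Set.univ (fun k => f k) := f.toLinearMap.convexOn convex_univ
  -- sSup of f over E equals sSup over K
  have hfsup : sSup ((fun k => f k) '' E) = sSup ((fun k => f k) '' K) := by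
    apply le_antisymm
    · exact csSup_le_csSup hbddfK (hEne.image _) (Set.image_mono hEK)
    · apply csSup_le (Set.Nonempty.image _ ⟨k₀, hk₀K⟩)
      rintro _ ⟨k, hk, rfl⟩
      exact aux_le_sSup hfconv f.continuous hbddfE k (hKE ▸ hk)
  -- a sequence in E along which f tends to the sup
  have hsupE : ∀ n : ℕ, ∃ e ∈ E, sSup ((fun k => f k) '' E) - 1 / (n + 1) < f e := by
    intro n
    have hlt : sSup ((fun k => f k) '' E) - 1 / (n + 1) < sSup ((fun k => f k) '' E) := by
      have : (0 : ℝ) < 1 / (n + 1) := by positivity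
      linarith
    obtain ⟨_, ⟨e, he, rfl⟩, hlt'⟩ := exists_lt_of_lt_csSup (hEne.image _) hlt
    exact ⟨e, he, hlt'⟩
  choose u huE hulo using hsupE
  have huK : ∀ n, u n ∈ K := fun n => hEK (huE n)
  have htend : Tendsto (fun n => f (u n)) atTop (nhds (sSup ((fun k => f k) '' K))) := by
    rw [← hfsup]
    have hlow : Tendsto (fun n : ℕ => sSup ((fun k => f k) '' E) - 1 / (n + 1)) atTop
        (nhds (sSup ((fun k => f k) '' E))) := by
      have := (tendsto_const_nhds (x := sSup ((fun k => f k) '' E)) (f := atTop (α := ℕ))).sub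
        tendsto_one_div_add_atTop_nhds_zero_nat
      simpa using this
    refine tendsto_of_tendsto_of_tendsto_of_le_of_le hlow tendsto_const_nhds
      (fun n => le_of_lt (hulo n)) (fun n => ?_)
    exact le_csSup hbddfE ⟨u n, huE n, rfl⟩
  have huk₀ : Tendsto u atTop (nhds k₀) := hfseq u huK htend
  have hk₀E : k₀ ∈ E := by
    have : k₀ ∈ closure E := mem_closure_of_tendsto huk₀ (Eventually.of_forall huE)
    rwa [hEcl.closure_eq] at this
  -- sSup of distances over E equals over K
  have hnconv : ConvexOn ℝ Set.univ (fun t : X => ‖x - t‖) := by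
    have h := (convexOn_univ_norm (E := X)).comp_affineMap
      (AffineMap.const ℝ X x - AffineMap.id ℝ X)
    simpa [Function.comp_def, Pi.sub_apply] using h
  have hnsup : sSup ((fun t => ‖x - t‖) '' E) = sSup ((fun t => ‖x - t‖) '' K) := by
    apply le_antisymm
    · exact csSup_le_csSup hbddK (hEne.image _) (Set.image_mono hEK)
    · apply csSup_le (Set.Nonempty.image _ ⟨k₀, hk₀K⟩)
      rintro _ ⟨k, hk, rfl⟩
      exact aux_le_sSup hnconv (by fun_prop) hbddE k (hKE ▸ hk)
  exact ⟨k₀, hk₀E, by rw [hnsup]; exact hk₀far⟩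
end

section
/- Let Y = (ℓ¹, |||·|||) with |||·||| equivalent to the ℓ¹ norm, E = {(n/(n+1))·eₙ/|||eₙ||| : n ∈ ℕ} ∪ {0}, and let K be the σ(ℓ¹, c₀)-closed convex hull of E. Then K is contained in the closed unit ball of Y, i.e., |||y||| ≤ 1 for all y ∈ K, and moreover K equals the norm-closed convex hull of E. -/
open scoped ZeroAtInfty
open Filter

noncomputable section

/-- `ℓ¹ = lp (fun _ : ℕ => ℝ) 1`. -/
abbrev ellOne := lp (fun _ : ℕ => ℝ) 1

theorem ellOne.summable_mul (x : ellOne) (f : C₀(ℕ, ℝ)) :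
    Summable (fun i => x i * f i) := by
  have hx : Summable (fun i => ‖x i‖) := by
    simpa using (lp.memℓp x).summable (by norm_num)
  refine Summable.of_norm_bounded (hx.mul_right ‖f‖) ?_
  intro i
  rw [norm_mul]
  exact mul_le_mul_of_nonneg_left (f.toBCF.norm_coe_le_norm i) (norm_nonneg _)

/-- The canonical map `ℓ¹ → (c₀)*` (the latter with its weak-star topology), `x ↦ (f ↦ ∑' i,
x i * f i)`; it realizes the weak-star topology `σ(ℓ¹, c₀)` on `ℓ¹`. -/
def ellOneToWeakDualC0 (x : ellOne) : WeakDual ℝ C₀(ℕ, ℝ) :=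
  LinearMap.mkContinuous
    { toFun := fun f => ∑' i, x i * f i
      map_add' := by
        intro f g
        simp only [ZeroAtInftyContinuousMap.coe_add, Pi.add_apply, mul_add]
        exact Summable.tsum_add (ellOne.summable_mul x f) (ellOne.summable_mul x g)
      map_smul' := by
        intro c f
        simp only [ZeroAtInftyContinuousMap.coe_smul, Pi.smul_apply, smul_eq_mul,
          RingHom.id_apply]
        rw [← tsum_mul_left]
        congr 1; ext i; ring }
    (∑' i, ‖x i‖)
    (by
      intro f
      simp only [LinearMap.coe_mk, AddHom.coe_mk]
      have hx : Summable (fun i => ‖x i‖) := by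
        simpa using (lp.memℓp x).summable (by norm_num)
      calc ‖∑' i, x i * f i‖ ≤ ∑' i, ‖x i * f i‖ :=
            norm_tsum_le_tsum_norm ((ellOne.summable_mul x f).norm)
        _ ≤ ∑' i, ‖x i‖ * ‖f‖ := by
            refine Summable.tsum_le_tsum (fun i => ?_) (ellOne.summable_mul x f).norm
              (hx.mul_right ‖f‖)
            rw [norm_mul]
            exact mul_le_mul_of_nonneg_left (f.toBCF.norm_coe_le_norm i) (norm_nonneg _)
        _ = (∑' i, ‖x i‖) * ‖f‖ := tsum_mul_right)

/-- The indicator of `{n}` as an element of `c₀`. -/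
def auxDelta (n : ℕ) : C₀(ℕ, ℝ) :=
  ⟨⟨(Pi.single n 1 : ℕ → ℝ), continuous_of_discreteTopology⟩, by
    show Tendsto (Pi.single n 1 : ℕ → ℝ) (cocompact ℕ) (nhds 0)
    rw [cocompact_eq_atTop]
    refine tendsto_const_nhds.congr' ?_
    filter_upwards [eventually_gt_atTop n] with k hk
    exact (Pi.single_eq_of_ne (M := fun _ : ℕ => ℝ) (by omega : k ≠ n) 1).symm⟩

theorem auxPhi_apply (x : ellOne) (f : C₀(ℕ, ℝ)) :
    ellOneToWeakDualC0 x f = ∑' i, x i * f i := rfl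

theorem auxPhi_delta (x : ellOne) (n : ℕ) : ellOneToWeakDualC0 x (auxDelta n) = x n := by
  rw [auxPhi_apply]
  rw [tsum_eq_single n]
  · show x n * (Pi.single n 1 : ℕ → ℝ) n = x n
    rw [Pi.single_eq_same, mul_one]
  · intro b hb
    show x b * (Pi.single n 1 : ℕ → ℝ) b = 0
    rw [Pi.single_eq_of_ne hb, mul_zero]

theorem auxPhi_add (x y : ellOne) :
    ellOneToWeakDualC0 (x + y) = ellOneToWeakDualC0 x + ellOneToWeakDualC0 y := by
  refine ContinuousLinearMap.ext fun f => ?_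
  show ellOneToWeakDualC0 (x + y) f = ellOneToWeakDualC0 x f + ellOneToWeakDualC0 y f
  rw [auxPhi_apply, auxPhi_apply, auxPhi_apply]
  have : ∀ i, (x + y) i * f i = x i * f i + y i * f i := by
    intro i
    have : (x + y) i = x i + y i := by rw [lp.coeFn_add]; rfl
    rw [this]; ring
  rw [tsum_congr this]
  exact Summable.tsum_add (ellOne.summable_mul x f) (ellOne.summable_mul y f)

theorem auxPhi_smul (c : ℝ) (x : ellOne) :
    ellOneToWeakDualC0 (c • x) = c • ellOneToWeakDualC0 x := by
  refine ContinuousLinearMap.ext fun f => ?_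
  show ellOneToWeakDualC0 (c • x) f = c * ellOneToWeakDualC0 x f
  rw [auxPhi_apply, auxPhi_apply]
  rw [← tsum_mul_left]
  refine tsum_congr fun i => ?_
  have : (c • x) i = c * x i := by rw [lp.coeFn_smul]; rfl
  rw [this]; ring

def auxPhiL : ellOne →ₗ[ℝ] WeakDual ℝ C₀(ℕ, ℝ) where
  toFun := ellOneToWeakDualC0
  map_add' := auxPhi_add
  map_smul' := auxPhi_smul

theorem auxPhi_cont : Continuous ellOneToWeakDualC0 := by
  refine WeakBilin.continuous_of_continuous_eval _ fun f => ?_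
  have hb : ∀ x : ellOne, ‖ellOneToWeakDualC0 x f‖ ≤ ‖f‖ * ‖x‖ := by
    intro x
    have hx : Summable (fun i => ‖x i‖) := by
      simpa using (lp.memℓp x).summable (by norm_num)
    have hnorm : ‖x‖ = ∑' i, ‖x i‖ := by
      simpa using lp.norm_eq_tsum_rpow (p := 1) (by norm_num) x
    rw [auxPhi_apply, hnorm, mul_comm]
    calc ‖∑' i, x i * f i‖ ≤ ∑' i, ‖x i * f i‖ :=
          norm_tsum_le_tsum_norm ((ellOne.summable_mul x f).norm)
      _ ≤ ∑' i, ‖x i‖ * ‖f‖ := by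
          refine Summable.tsum_le_tsum (fun i => ?_) (ellOne.summable_mul x f).norm
            (hx.mul_right ‖f‖)
          rw [norm_mul]
          exact mul_le_mul_of_nonneg_left (f.toBCF.norm_coe_le_norm i) (norm_nonneg _)
      _ = (∑' i, ‖x i‖) * ‖f‖ := tsum_mul_right
  let L : ellOne →ₗ[ℝ] ℝ :=
    { toFun := fun x => ellOneToWeakDualC0 x f
      map_add' := fun x y => by
        show ellOneToWeakDualC0 (x + y) f = _; rw [auxPhi_add]; rfl
      map_smul' := fun c x => by
        show ellOneToWeakDualC0 (c • x) f = _; rw [auxPhi_smul]; rfl }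
  exact (L.mkContinuous ‖f‖ hb).continuous

theorem aux_sum_mem_convexHull {V : Type*} [AddCommGroup V] [Module ℝ V] {s : Set V}
    (h0 : (0 : V) ∈ s) (t : Finset ℕ) (w : ℕ → ℝ) (z : ℕ → V)
    (hw : ∀ n ∈ t, 0 ≤ w n) (hsum : ∑ n ∈ t, w n ≤ 1) (hz : ∀ n ∈ t, z n ∈ s) :
    (∑ n ∈ t, w n • z n) ∈ convexHull ℝ s := by
  by_cases hσ : ∑ n ∈ t, w n = 0
  · have hz0 : ∀ n ∈ t, w n • z n = 0 := fun n hn => by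
      rw [(Finset.sum_eq_zero_iff_of_nonneg hw).1 hσ n hn, zero_smul]
    rw [Finset.sum_congr rfl hz0, Finset.sum_const_zero]
    exact subset_convexHull ℝ s h0
  · have hσpos : 0 < ∑ n ∈ t, w n := lt_of_le_of_ne (Finset.sum_nonneg hw) (Ne.symm hσ)
    have hcm := t.centerMass_mem_convexHull hw hσpos hz
    have h0' := subset_convexHull ℝ s h0
    have hσle : ∑ n ∈ t, w n ≤ 1 := hsum
    have hcomb : (∑ n ∈ t, w n) • t.centerMass w z + (1 - ∑ n ∈ t, w n) • (0 : V) ∈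
        convexHull ℝ s :=
      (convex_convexHull ℝ s) hcm h0' hσpos.le (by linarith) (by ring)
    rw [smul_zero, add_zero, Finset.centerMass, smul_smul,
      mul_inv_cancel₀ hσ, one_smul] at hcomb
    exact hcomb

/-- Let `Y = (ℓ¹, |||·|||)` with `|||·|||` equivalent to the `ℓ¹` norm
(realized as `|||x||| = ‖T x‖` for an isomorphism `T` of `ℓ¹` onto a Banach space `Y`),
`E = {(n/(n+1)) • eₙ/|||eₙ||| : n ∈ ℕ} ∪ {0}`, and let `K` be the `σ(ℓ¹, c₀)`-closed
convex hull of `E` (computed through the canonical embedding `ellOneToWeakDualC0` of `ℓ¹`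
into the weak-star dual of `c₀`). Then `K` is contained in the closed unit ball of `Y`,
i.e. `|||y||| ≤ 1` for all `y ∈ K`, and moreover `K` equals the norm-closed convex hull
of `E`. -/
theorem stmt11 {Y : Type*} [NormedAddCommGroup Y] [NormedSpace ℝ Y] [CompleteSpace Y]
    (T : ellOne ≃L[ℝ] Y) :
    (∀ y ∈ ellOneToWeakDualC0 ⁻¹' closure (convexHull ℝ (ellOneToWeakDualC0 ''
        ((Set.range fun n : ℕ =>
            (((n : ℝ) / (n + 1)) / ‖T (lp.single 1 n (1 : ℝ))‖) • lp.single 1 n (1 : ℝ)) ∪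
          {0}))), ‖T y‖ ≤ 1) ∧
      ellOneToWeakDualC0 ⁻¹' closure (convexHull ℝ (ellOneToWeakDualC0 ''
        ((Set.range fun n : ℕ =>
            (((n : ℝ) / (n + 1)) / ‖T (lp.single 1 n (1 : ℝ))‖) • lp.single 1 n (1 : ℝ)) ∪
          {0}))) =
      closure (convexHull ℝ
        ((Set.range fun n : ℕ =>
            (((n : ℝ) / (n + 1)) / ‖T (lp.single 1 n (1 : ℝ))‖) • lp.single 1 n (1 : ℝ)) ∪
          {0})) := by
  classical
  set e : ℕ → ellOne := fun n => lp.single 1 n (1 : ℝ) with he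
  set c : ℕ → ℝ := fun n => ((n : ℝ) / (n + 1)) / ‖T (e n)‖ with hc
  set E' : Set ellOne := (Set.range fun n => c n • e n) ∪ {0} with hE'
  -- basic facts
  have hen : ∀ n, e n ≠ 0 := by
    intro n h
    have := congrArg (fun v : ellOne => v n) h
    simp only [he] at this
    rw [lp.single_apply_self] at this
    rw [show ((0 : ellOne) n) = 0 from congrFun (lp.coeFn_zero (fun _ : ℕ => ℝ) 1) n] at this
    exact one_ne_zero this
  have hTe : ∀ n, 0 < ‖T (e n)‖ := by
    intro n
    rw [norm_pos_iff]
    intro h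
    exact hen n (T.injective (by rw [h, map_zero]))
  have hc0 : c 0 = 0 := by simp [hc]
  have hcnn : ∀ n, 0 ≤ c n := fun n =>
    div_nonneg (div_nonneg (Nat.cast_nonneg n) (by positivity)) (norm_nonneg _)
  have hcpos : ∀ n, n ≠ 0 → 0 < c n := by
    intro n hn
    refine div_pos (div_pos ?_ ?_) (hTe n)
    · exact_mod_cast Nat.pos_of_ne_zero hn
    · positivity
  have hcoord : ∀ m k, ((c m • e m : ellOne) k) = if k = m then c m else 0 := by
    intro m k
    have h1 : (c m • e m : ellOne) k = c m * (e m) k := by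
      rw [lp.coeFn_smul]; rfl
    rw [h1]
    by_cases h : k = m
    · subst h; rw [he]; rw [lp.single_apply_self, if_pos rfl, mul_one]
    · rw [he]; rw [lp.single_apply_ne _ _ _ h, if_neg h, mul_zero]
  have hE'coord : ∀ v ∈ E', ∃ m, ∀ k, (v : ℕ → ℝ) k = if k = m then c m else 0 := by
    rintro v (⟨m, rfl⟩ | hv)
    · exact ⟨m, hcoord m⟩
    · refine ⟨0, fun k => ?_⟩
      rw [Set.mem_singleton_iff.1 hv]
      rw [show ((0 : ellOne) k) = 0 from congrFun (lp.coeFn_zero (fun _ : ℕ => ℝ) 1) k]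
      by_cases h : k = 0
      · rw [if_pos h, hc0]
      · rw [if_neg h]
  -- the key halfspace lemma
  have key : ∀ (F : Finset ℕ) (w : ℕ → ℝ) (a : ℝ),
      (∀ v ∈ E', ∑ n ∈ F, w n * (v : ℕ → ℝ) n ≤ a) →
      ∀ x : ellOne,
        ellOneToWeakDualC0 x ∈ closure (convexHull ℝ (ellOneToWeakDualC0 '' E')) →
        ∑ n ∈ F, w n * x n ≤ a := by
    intro F w a hEa x hx
    set g : WeakDual ℝ C₀(ℕ, ℝ) → ℝ := fun φ => ∑ n ∈ F, w n * φ (auxDelta n) with hg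
    have hglin : IsLinearMap ℝ g := by
      constructor
      · intro φ ψ
        simp only [hg]
        rw [← Finset.sum_add_distrib]
        refine Finset.sum_congr rfl fun n _ => ?_
        have : (φ + ψ) (auxDelta n) = φ (auxDelta n) + ψ (auxDelta n) := rfl
        rw [this]; ring
      · intro r φ
        simp only [hg, smul_eq_mul, Finset.mul_sum]
        refine Finset.sum_congr rfl fun n _ => ?_
        have : (r • φ) (auxDelta n) = r * φ (auxDelta n) := rfl
        rw [this]; ring
    have hgcont : Continuous g := by
      refine continuous_finset_sum _ fun n _ => ?_
      exact continuous_const.mul (WeakDual.eval_continuous (auxDelta n))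
    have hsubset : ellOneToWeakDualC0 '' E' ⊆ {φ | g φ ≤ a} := by
      rintro _ ⟨v, hv, rfl⟩
      show g (ellOneToWeakDualC0 v) ≤ a
      have : g (ellOneToWeakDualC0 v) = ∑ n ∈ F, w n * (v : ℕ → ℝ) n := by
        simp only [hg]
        exact Finset.sum_congr rfl fun n _ => by rw [auxPhi_delta]
      rw [this]
      exact hEa v hv
    have hfinal := closure_minimal
      (convexHull_min hsubset (convex_halfSpace_le hglin a))
      (isClosed_le hgcont continuous_const) hx
    have : g (ellOneToWeakDualC0 x) = ∑ n ∈ F, w n * x n := by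
      simp only [hg]
      exact Finset.sum_congr rfl fun n _ => by rw [auxPhi_delta]
    rw [← this]
    exact hfinal
  -- The hard inclusion: preimage of weak-star closure ⊆ norm closure
  have hAB : ellOneToWeakDualC0 ⁻¹' closure (convexHull ℝ (ellOneToWeakDualC0 '' E')) ⊆
      closure (convexHull ℝ E') := by
    intro x hx
    have hxn : ∀ n, 0 ≤ x n := by
      intro n
      have hgen : ∀ v ∈ E', ∑ m ∈ {n}, (-1 : ℝ) * (v : ℕ → ℝ) m ≤ 0 := by
        intro v hv
        obtain ⟨m, hm⟩ := hE'coord v hv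
        rw [Finset.sum_singleton, hm n]
        by_cases h : n = m
        · rw [if_pos h]; nlinarith [hcnn m]
        · rw [if_neg h]; norm_num
      have h := key {n} (fun _ => (-1 : ℝ)) 0 hgen x hx
      rw [Finset.sum_singleton] at h
      have h' : (-1 : ℝ) * x n ≤ 0 := h
      linarith
    have hx0 : x 0 = 0 := by
      refine le_antisymm ?_ (hxn 0)
      have hgen : ∀ v ∈ E', ∑ m ∈ {0}, (1 : ℝ) * (v : ℕ → ℝ) m ≤ 0 := by
        intro v hv
        obtain ⟨m, hm⟩ := hE'coord v hv
        rw [Finset.sum_singleton, hm 0]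
        by_cases h : (0 : ℕ) = m
        · rw [if_pos h, ← h, hc0]; norm_num
        · rw [if_neg h]; norm_num
      have h := key {0} (fun _ => (1 : ℝ)) 0 hgen x hx
      rw [Finset.sum_singleton] at h
      have h' : (1 : ℝ) * x 0 ≤ 0 := h
      linarith
    have hxF : ∀ F : Finset ℕ, ∑ n ∈ F, (c n)⁻¹ * x n ≤ 1 := by
      intro F
      refine key F (fun n => (c n)⁻¹) 1 ?_ x hx
      intro v hv
      obtain ⟨m, hm⟩ := hE'coord v hv
      have : ∀ n ∈ F, (c n)⁻¹ * (v : ℕ → ℝ) n =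
          if n = m then (c m)⁻¹ * c m else 0 := by
        intro n _
        rw [hm n]
        by_cases h : n = m
        · rw [if_pos h, if_pos h, h]
        · rw [if_neg h, if_neg h, mul_zero]
      rw [Finset.sum_congr rfl this, Finset.sum_ite_eq' F m (fun _ => (c m)⁻¹ * c m)]
      by_cases hmF : m ∈ F
      · rw [if_pos hmF]
        by_cases hcm : c m = 0
        · rw [hcm, mul_zero]; norm_num
        · rw [inv_mul_cancel₀ hcm]
      · rw [if_neg hmF]; norm_num
    -- partial sums lie in the convex hull
    have hmem : ∀ s : Finset ℕ, (∑ n ∈ s, lp.single 1 n (x n)) ∈ convexHull ℝ E' := by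
      intro s
      have hterm : ∀ n, lp.single 1 n (x n) = ((c n)⁻¹ * x n) • (c n • e n) := by
        intro n
        have h1 : lp.single 1 n (x n) = x n • e n := by
          have h2 := lp.single_smul (E := fun _ : ℕ => ℝ) 1 n (x n) (1 : ℝ)
          rw [smul_eq_mul, mul_one] at h2
          exact h2
        rw [h1, smul_smul]
        congr 1
        by_cases hn : n = 0
        · subst hn; rw [hx0, hc0]; ring
        · rw [mul_comm ((c n)⁻¹) (x n), mul_assoc,
            inv_mul_cancel₀ (hcpos n hn).ne', mul_one]
      rw [Finset.sum_congr rfl fun n _ => hterm n]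
      refine aux_sum_mem_convexHull ?_ s _ _ ?_ (hxF s) ?_
      · exact Set.mem_union_right _ rfl
      · exact fun n _ => mul_nonneg (inv_nonneg.2 (hcnn n)) (hxn n)
      · exact fun n _ => Set.mem_union_left _ ⟨n, rfl⟩
    have hsum : HasSum (fun n => lp.single 1 n (x n)) x := lp.hasSum_single (by norm_num) x
    exact mem_closure_of_tendsto hsum (Filter.Eventually.of_forall hmem)
  -- the easy inclusion
  have hBA : closure (convexHull ℝ E') ⊆
      ellOneToWeakDualC0 ⁻¹' closure (convexHull ℝ (ellOneToWeakDualC0 '' E')) := by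
    intro x hx
    have h1 : ellOneToWeakDualC0 x ∈ ellOneToWeakDualC0 '' closure (convexHull ℝ E') :=
      ⟨x, hx, rfl⟩
    have h2 := image_closure_subset_closure_image (f := ellOneToWeakDualC0) auxPhi_cont h1
    have h3 : ellOneToWeakDualC0 '' convexHull ℝ E' =
        convexHull ℝ (ellOneToWeakDualC0 '' E') := LinearMap.image_convexHull auxPhiL E'
    rw [h3] at h2
    exact h2
  have heq : ellOneToWeakDualC0 ⁻¹' closure (convexHull ℝ (ellOneToWeakDualC0 '' E')) =
      closure (convexHull ℝ E') := le_antisymm hAB hBA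
  refine ⟨?_, heq⟩
  -- unit ball containment
  have hball : closure (convexHull ℝ E') ⊆ {y : ellOne | ‖T y‖ ≤ 1} := by
    refine closure_minimal (convexHull_min ?_ ?_) ?_
    · rintro v (⟨n, rfl⟩ | hv)
      · show ‖T (c n • e n)‖ ≤ 1
        rw [map_smul, norm_smul, Real.norm_eq_abs, abs_of_nonneg (hcnn n), hc]
        rw [div_mul_cancel₀ _ (hTe n).ne']
        rw [div_le_one (by positivity)]
        linarith [Nat.cast_nonneg (α := ℝ) n]
      · rw [Set.mem_singleton_iff.1 hv]
        simp only [Set.mem_setOf_eq, map_zero, norm_zero]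
        norm_num
    · have hset : {y : ellOne | ‖T y‖ ≤ 1} = (⇑T) ⁻¹' Metric.closedBall 0 1 := by
        ext y
        simp [Metric.mem_closedBall, dist_zero_right]
      rw [hset]
      exact (convex_closedBall (0 : Y) 1).is_linear_preimage ⟨map_add T, map_smul T⟩
    · exact isClosed_le (T.continuous.norm) continuous_const
  intro y hy
  exact hball (heq ▸ hy)

end
end

section
/- Every infinite-dimensional Banach space X contains a closed bounded convex set K that is not remotal; in fact K can be chosen inside the closed unit ball with sup{‖k‖ : k ∈ K} = 1 but ‖k‖ < 1 for every k ∈ K, so K is not remotal from 0. -/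
open Filter Topology Classical
set_option linter.unusedSectionVars false
set_option maxHeartbeats 1000000

section aux
variable {X : Type*} [NormedAddCommGroup X] [NormedSpace ℝ X]

/-- A unit vector in the intersection of the kernels of finitely many functionals. -/
lemma exists_unit_in_kernels (hinf : ¬ FiniteDimensional ℝ X) (G : Finset (X →L[ℝ] ℝ)) :
    ∃ x : X, ‖x‖ = 1 ∧ ∀ h ∈ G, h x = 0 := by
  classical
  set φ : X →ₗ[ℝ] (G → ℝ) := LinearMap.pi (fun h : G => (h : X →L[ℝ] ℝ).toLinearMap) with hφ
  have : ¬ Function.Injective φ := by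
    intro hi
    exact hinf (FiniteDimensional.of_injective φ hi)
  rw [← LinearMap.ker_eq_bot] at this
  obtain ⟨x, hx, hx0⟩ := Submodule.exists_mem_ne_zero_of_ne_bot this
  refine ⟨‖x‖⁻¹ • x, ?_, ?_⟩
  · rw [norm_smul, norm_inv, norm_norm, inv_mul_cancel₀ (norm_ne_zero_iff.2 hx0)]
  · intro h hG
    have := congrFun (LinearMap.mem_ker.1 hx) ⟨h, hG⟩
    have h0 : h x = 0 := this
    rw [map_smul, h0, smul_zero]

open Classical in
/-- Norming functional, or `0` if the vector is `0`. -/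
noncomputable def normFn (u : X) : X →L[ℝ] ℝ :=
  if h : u = 0 then 0 else (exists_dual_vector ℝ u (norm_ne_zero_iff.2 h)).choose

lemma normFn_norm_le (u : X) : ‖normFn u‖ ≤ 1 := by
  unfold normFn
  split_ifs
  · simp
  · exact le_of_eq (exists_dual_vector ℝ u (norm_ne_zero_iff.2 (by assumption))).choose_spec.1

lemma normFn_apply (u : X) (hu : u ≠ 0) : normFn u u = ‖u‖ := by
  unfold normFn
  rw [dif_neg hu]
  exact (exists_dual_vector ℝ u (norm_ne_zero_iff.2 hu)).choose_spec.2

/-- A finite set of norm-`≤1` functionals almost norming all small vectors of a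
finite-dimensional piece. -/
lemma exists_norming_finset [CompleteSpace X] (s : Finset X) (r δ : ℝ) (hδ : 0 < δ) :
    ∃ G : Finset (X →L[ℝ] ℝ), (∀ h ∈ G, ‖h‖ ≤ 1) ∧
      ∀ z ∈ Submodule.span ℝ (s : Set X), ‖z‖ ≤ r → ∃ h ∈ G, ‖z‖ ≤ |h z| + δ := by
  classical
  set E := Submodule.span ℝ (s : Set X) with hE
  haveI : FiniteDimensional ℝ E := FiniteDimensional.span_of_finite ℝ s.finite_toSet
  have hcpt : IsCompact ((Subtype.val '' (Metric.closedBall (0 : E) r) : Set X)) :=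
    (isCompact_closedBall (0 : E) r).image continuous_subtype_val
  obtain ⟨t, htfin, hcov⟩ := Metric.totallyBounded_iff.1 hcpt.totallyBounded (δ / 3) (by linarith)
  refine ⟨insert 0 (htfin.toFinset.image normFn), ?_, ?_⟩
  · intro h hh
    rcases Finset.mem_insert.1 hh with h0 | h1
    · simp [h0]
    · obtain ⟨u, _, rfl⟩ := Finset.mem_image.1 h1
      exact normFn_norm_le u
  · intro z hz hzr
    have hzmem : z ∈ (Subtype.val '' (Metric.closedBall (0 : E) r) : Set X) := by
      refine ⟨⟨z, hz⟩, ?_, rfl⟩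
      simpa [Metric.mem_closedBall, dist_eq_norm] using hzr
    obtain ⟨u, hut, hzu⟩ := Set.mem_iUnion₂.1 (hcov hzmem)
    have hdist : ‖z - u‖ < δ / 3 := by
      simpa [Metric.mem_ball, dist_eq_norm] using hzu
    by_cases hu : u = 0
    · refine ⟨0, Finset.mem_insert_self _ _, ?_⟩
      have : ‖z‖ < δ / 3 := by
        calc ‖z‖ = ‖z - u‖ := by rw [hu, sub_zero]
        _ < δ / 3 := hdist
      simp only [ContinuousLinearMap.zero_apply, abs_zero, zero_add]
      linarith
    · refine ⟨normFn u, Finset.mem_insert_of_mem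
        (Finset.mem_image_of_mem _ (htfin.mem_toFinset.2 hut)), ?_⟩
      have h1 : ‖u‖ = normFn u u := (normFn_apply u hu).symm
      have h2 : |normFn u u - normFn u z| ≤ ‖u - z‖ := by
        calc |normFn u u - normFn u z| = |normFn u (u - z)| := by rw [map_sub]
        _ ≤ ‖normFn u‖ * ‖u - z‖ := (normFn u).le_opNorm _
        _ ≤ 1 * ‖u - z‖ := by
            exact mul_le_mul_of_nonneg_right (normFn_norm_le u) (norm_nonneg _)
        _ = ‖u - z‖ := one_mul _
      have h3 : ‖u - z‖ < δ / 3 := by rwa [norm_sub_rev] at hdist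
      have h4 : ‖z‖ ≤ ‖u‖ + δ / 3 := by
        calc ‖z‖ = ‖u + (z - u)‖ := by rw [show u + (z - u) = z by abel]
        _ ≤ ‖u‖ + ‖z - u‖ := norm_add_le _ _
        _ ≤ ‖u‖ + δ / 3 := by linarith
      have h5 : normFn u u ≤ |normFn u z| + δ / 3 := by
        have := abs_sub_abs_le_abs_sub (normFn u u) (normFn u z)
        have habs : |normFn u u| = normFn u u := by
          rw [← h1, abs_of_nonneg (norm_nonneg u), h1]
        nlinarith [abs_nonneg (normFn u z)]
      calc ‖z‖ ≤ ‖u‖ + δ / 3 := h4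
      _ = normFn u u + δ / 3 := by rw [h1]
      _ ≤ |normFn u z| + δ / 3 + δ / 3 := by linarith
      _ ≤ |normFn u z| + δ := by linarith

variable [CompleteSpace X]

noncomputable def HH (l : List X) : Finset (X →L[ℝ] ℝ) :=
  if hl : 0 < l.length then
    (exists_norming_finset l.toFinset (l.length : ℝ)
      (1 / (l.length : ℝ)) (one_div_pos.2 (by exact_mod_cast hl))).choose
  else ∅

lemma HH_spec (l : List X) (hl : 0 < l.length) :
    (∀ h ∈ HH l, ‖h‖ ≤ 1) ∧
      ∀ z ∈ Submodule.span ℝ (l.toFinset : Set X), ‖z‖ ≤ (l.length : ℝ) →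
        ∃ h ∈ HH l, ‖z‖ ≤ |h z| + 1 / (l.length : ℝ) := by
  unfold HH
  rw [dif_pos hl]
  exact (exists_norming_finset l.toFinset (l.length : ℝ)
      (1 / (l.length : ℝ)) (one_div_pos.2 (by exact_mod_cast hl))).choose_spec

noncomputable def bigG (l : List X) : Finset (X →L[ℝ] ℝ) :=
  (Finset.range l.length).biUnion fun m => HH (l.take (m + 1))

noncomputable def pick (hinf : ¬ FiniteDimensional ℝ X) (l : List X) : X :=
  (exists_unit_in_kernels hinf (bigG l)).choose

lemma pick_norm (hinf : ¬ FiniteDimensional ℝ X) (l : List X) : ‖pick hinf l‖ = 1 :=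
  (exists_unit_in_kernels hinf (bigG l)).choose_spec.1

lemma pick_kills (hinf : ¬ FiniteDimensional ℝ X) (l : List X) :
    ∀ h ∈ bigG l, h (pick hinf l) = 0 :=
  (exists_unit_in_kernels hinf (bigG l)).choose_spec.2

noncomputable def build (hinf : ¬ FiniteDimensional ℝ X) : ℕ → List X
  | 0 => []
  | n + 1 => build hinf n ++ [pick hinf (build hinf n)]

noncomputable def ee (hinf : ¬ FiniteDimensional ℝ X) (n : ℕ) : X :=
  pick hinf (build hinf n)

lemma ee_norm (hinf : ¬ FiniteDimensional ℝ X) (n : ℕ) : ‖ee hinf n‖ = 1 :=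
  pick_norm hinf _

lemma build_eq (hinf : ¬ FiniteDimensional ℝ X) (n : ℕ) :
    build hinf n = (List.range n).map (ee hinf) := by
  induction n with
  | zero => simp [build]
  | succ n ih => rw [build, List.range_succ, List.map_append, ← ih]; rfl

lemma build_length (hinf : ¬ FiniteDimensional ℝ X) (n : ℕ) :
    (build hinf n).length = n := by
  rw [build_eq]; simp

lemma build_take (hinf : ¬ FiniteDimensional ℝ X) {m n : ℕ} (h : m ≤ n) :
    (build hinf n).take m = build hinf m := by
  rw [build_eq, build_eq, ← List.map_take, List.take_range, Nat.min_eq_left h]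

noncomputable def Hm (hinf : ¬ FiniteDimensional ℝ X) (m : ℕ) : Finset (X →L[ℝ] ℝ) :=
  HH (build hinf (m + 1))

lemma Hm_norm_le (hinf : ¬ FiniteDimensional ℝ X) (m : ℕ) :
    ∀ h ∈ Hm hinf m, ‖h‖ ≤ 1 :=
  (HH_spec _ (by rw [build_length]; omega)).1

lemma Hm_kills (hinf : ¬ FiniteDimensional ℝ X) {m n : ℕ} (hmn : m < n) :
    ∀ h ∈ Hm hinf m, h (ee hinf n) = 0 := by
  intro h hh
  apply pick_kills hinf (build hinf n)
  unfold bigG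
  apply Finset.mem_biUnion.2
  refine ⟨m, ?_, ?_⟩
  · rw [Finset.mem_range, build_length]; exact hmn
  · rwa [build_take hinf (by omega : m + 1 ≤ n)]

lemma Hm_norming (hinf : ¬ FiniteDimensional ℝ X) (m : ℕ) :
    ∀ z ∈ Submodule.span ℝ {a : X | a ∈ build hinf (m + 1)},
      ‖z‖ ≤ (m : ℝ) + 1 → ∃ h ∈ Hm hinf m, ‖z‖ ≤ |h z| + 1 / ((m : ℝ) + 1) := by
  unfold Hm
  have hl : 0 < (build hinf (m + 1)).length := by rw [build_length]; omega
  have := (HH_spec (build hinf (m + 1)) hl).2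
  rw [build_length] at this
  push_cast at this
  exact this

lemma totality (hinf : ¬ FiniteDimensional ℝ X) :
    ∀ x ∈ closure ((Submodule.span ℝ (Set.range (ee hinf)) : Submodule ℝ X) : Set X),
      ∀ δ : ℝ, 0 < δ → ∃ m, ∃ h ∈ Hm hinf m, ‖x‖ ≤ |h x| + δ := by
  intro x hx δ hδ
  obtain ⟨z, hzmem, hxz⟩ := Metric.mem_closure_iff.1 hx (δ / 3) (by linarith)
  rw [dist_eq_norm] at hxz
  obtain ⟨T, hTsub, hzT⟩ := Submodule.mem_span_finite_of_mem_span hzmem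
  set f : X → ℕ := fun u => if h : ∃ i, ee hinf i = u then h.choose else 0 with hf
  have hfT : ∀ u ∈ T, ee hinf (f u) = u := by
    intro u hu
    have hex : ∃ i, ee hinf i = u := hTsub hu
    simp only [hf, dif_pos hex]
    exact hex.choose_spec
  set m : ℕ := max (T.sup f) (max ⌈‖z‖⌉₊ ⌈(3:ℝ)/δ⌉₊) with hm
  -- z is in the span of the first m+1 vectors
  have hTb : (T : Set X) ⊆ {a : X | a ∈ build hinf (m + 1)} := by
    intro u hu
    rw [build_eq]
    simp only [Set.mem_setOf_eq, List.mem_map, List.mem_range]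
    refine ⟨f u, ?_, hfT u hu⟩
    have : f u ≤ T.sup f := Finset.le_sup hu
    omega
  have hzspan : z ∈ Submodule.span ℝ {a : X | a ∈ build hinf (m + 1)} :=
    Submodule.span_mono hTb hzT
  have hznorm : ‖z‖ ≤ (m : ℝ) + 1 := by
    have h1 : ‖z‖ ≤ (⌈‖z‖⌉₊ : ℝ) := Nat.le_ceil _
    have h2 : (⌈‖z‖⌉₊ : ℝ) ≤ (m : ℝ) := by
      have : ⌈‖z‖⌉₊ ≤ m := le_max_of_le_right (le_max_left _ _)
      exact_mod_cast this
    linarith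
  obtain ⟨h, hhm, hzh⟩ := Hm_norming hinf m z hzspan hznorm
  have hmδ : 1 / ((m : ℝ) + 1) ≤ δ / 3 := by
    have h1 : (3 : ℝ) / δ ≤ (⌈(3:ℝ)/δ⌉₊ : ℝ) := Nat.le_ceil _
    have h2 : (⌈(3:ℝ)/δ⌉₊ : ℝ) ≤ (m : ℝ) := by
      have : ⌈(3:ℝ)/δ⌉₊ ≤ m := le_max_of_le_right (le_max_right _ _)
      exact_mod_cast this
    have h3 : (3 : ℝ) / δ ≤ (m : ℝ) + 1 := by linarith
    have h4 : (0 : ℝ) < 3 / δ := by positivity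
    calc 1 / ((m : ℝ) + 1) ≤ 1 / ((3:ℝ)/δ) := by
          apply one_div_le_one_div_of_le h4 h3
    _ = δ / 3 := by rw [one_div_div]
  refine ⟨m, h, hhm, ?_⟩
  have hh1 : ‖h‖ ≤ 1 := Hm_norm_le hinf m h hhm
  have hzx : |h z - h x| ≤ ‖z - x‖ := by
    calc |h z - h x| = |h (z - x)| := by rw [map_sub]
    _ ≤ ‖h‖ * ‖z - x‖ := h.le_opNorm _
    _ ≤ 1 * ‖z - x‖ := mul_le_mul_of_nonneg_right hh1 (norm_nonneg _)
    _ = ‖z - x‖ := one_mul _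
  have hzx' : ‖z - x‖ < δ / 3 := by rwa [norm_sub_rev] at hxz
  have habs : |h z| ≤ |h x| + ‖z - x‖ := by
    have := abs_sub_abs_le_abs_sub (h z) (h x)
    linarith
  calc ‖x‖ ≤ ‖z‖ + ‖x - z‖ := by
        rw [show x = z + (x - z) by abel]; exact (norm_add_le _ _).trans (by simp [norm_sub_rev])
  _ ≤ |h z| + 1 / ((m : ℝ) + 1) + ‖x - z‖ := by linarith
  _ ≤ |h x| + δ := by
      rw [norm_sub_rev] at hxz ⊢
      linarith
lemma convexHull_range_exists {v : ℕ → X} {y : X} (hy : y ∈ convexHull ℝ (Set.range v)) :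
    ∃ (S : Finset ℕ) (t : ℕ → ℝ), (∀ n ∈ S, 0 ≤ t n) ∧ ∑ n ∈ S, t n = 1 ∧
      y = ∑ n ∈ S, t n • v n := by
  rw [convexHull_eq] at hy
  obtain ⟨ι, T, w, z, h0, h1, hz, hy⟩ := hy
  set g : ι → ℕ := fun i => if h : ∃ n, v n = z i then h.choose else 0 with hg
  have hgz : ∀ i ∈ T, v (g i) = z i := by
    intro i hi
    have hex : ∃ n, v n = z i := Set.mem_range.1 (hz i hi)
    simp only [hg, dif_pos hex]
    exact hex.choose_spec
  refine ⟨T.image g, fun n => ∑ i ∈ T.filter (fun i => g i = n), w i, ?_, ?_, ?_⟩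
  · intro n _
    exact Finset.sum_nonneg fun i hi => h0 i (Finset.mem_filter.1 hi).1
  · rw [Finset.sum_fiberwise_of_maps_to (fun i hi => Finset.mem_image_of_mem g hi) w]
    exact h1
  · rw [← hy, Finset.centerMass_eq_of_sum_1 _ _ h1]
    rw [← Finset.sum_fiberwise_of_maps_to
      (fun i hi => Finset.mem_image_of_mem g hi) (fun i => w i • z i)]
    apply Finset.sum_congr rfl
    intro n _
    rw [Finset.sum_smul]
    apply Finset.sum_congr rfl
    intro i hi
    obtain ⟨hiT, hgi⟩ := Finset.mem_filter.1 hi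
    rw [← hgi, hgz i hiT]
end aux

/-- **Main theorem.** Every infinite-dimensional Banach space `X` contains
a nonempty closed bounded convex set `K` that is not remotal; in fact `K` can be chosen
inside the closed unit ball with `sup {‖k‖ : k ∈ K} = 1` but `‖k‖ < 1` for every `k ∈ K`,
so `K` is not remotal from `0`. -/
theorem stmt12 {X : Type*} [NormedAddCommGroup X] [NormedSpace ℝ X] [CompleteSpace X]
    (hinf : ¬ FiniteDimensional ℝ X) :
    ∃ K : Set X, K.Nonempty ∧ IsClosed K ∧ Bornology.IsBounded K ∧ Convex ℝ K ∧
      K ⊆ Metric.closedBall (0 : X) 1 ∧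
      sSup ((fun k => ‖k‖) '' K) = 1 ∧ (∀ k ∈ K, ‖k‖ < 1) ∧
      ¬ IsRemotalFrom K (0 : X) := by
  classical
  set εr : ℕ → ℝ := fun n => 1 / ((n : ℝ) + 2) with hεr
  have hε_pos : ∀ n, 0 < εr n := fun n => by positivity
  have hε_le : ∀ n, εr n ≤ 1 := by
    intro n
    rw [hεr]
    rw [div_le_one (by positivity)]
    have : (0:ℝ) ≤ (n:ℝ) := Nat.cast_nonneg n
    linarith
  set v : ℕ → X := fun n => (1 - εr n) • ee hinf n with hv
  have hvnorm : ∀ n, ‖v n‖ = 1 - εr n := by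
    intro n
    rw [hv]
    simp only [norm_smul, ee_norm hinf n, mul_one, Real.norm_eq_abs]
    exact abs_of_nonneg (by linarith [hε_le n, hε_pos n])
  set C : Set X := convexHull ℝ (Set.range v) with hC
  set K : Set X := closure C with hK
  have hv_mem : ∀ n, v n ∈ K := fun n =>
    subset_closure (subset_convexHull ℝ _ (Set.mem_range_self n))
  have hCsub : C ⊆ Metric.closedBall (0 : X) 1 := by
    apply convexHull_min
    · rintro _ ⟨n, rfl⟩
      rw [Metric.mem_closedBall, dist_zero_right, hvnorm n]
      linarith [hε_pos n]
    · exact convex_closedBall _ _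
  have hKsub : K ⊆ Metric.closedBall (0 : X) 1 :=
    closure_minimal hCsub Metric.isClosed_closedBall
  -- membership in the closure of the span
  have hKspan : K ⊆ closure ((Submodule.span ℝ (Set.range (ee hinf)) : Submodule ℝ X) : Set X) := by
    apply closure_mono
    apply convexHull_min
    · rintro _ ⟨n, rfl⟩
      exact Submodule.smul_mem _ _ (Submodule.subset_span (Set.mem_range_self n))
    · exact (Submodule.span ℝ (Set.range (ee hinf))).convex
  -- MAIN: all elements of K have norm < 1
  have hmain : ∀ x ∈ K, ‖x‖ < 1 := by
    intro x hxK
    obtain ⟨xs, hxs, hlim⟩ := mem_closure_iff_seq_limit.1 hxK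
    choose S t ht0 ht1 hrep using fun k => convexHull_range_exists (hxs k)
    set s : ℕ → ℝ := fun k => ∑ n ∈ S k, t k n * εr n with hs
    have hs0 : ∀ k, 0 ≤ s k := fun k =>
      Finset.sum_nonneg fun n hn => mul_nonneg (ht0 k n hn) (hε_pos n).le
    have hterm : ∀ (h : X →L[ℝ] ℝ), ‖h‖ ≤ 1 → ∀ k n, n ∈ S k →
        |t k n * h (v n)| ≤ t k n * (1 - εr n) := by
      intro h hh k n hn
      rw [abs_mul, abs_of_nonneg (ht0 k n hn)]
      apply mul_le_mul_of_nonneg_left _ (ht0 k n hn)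
      calc |h (v n)| ≤ ‖h‖ * ‖v n‖ := h.le_opNorm _
      _ ≤ 1 * (1 - εr n) := by
          apply mul_le_mul hh (le_of_eq (hvnorm n)) (norm_nonneg _) zero_le_one
      _ = 1 - εr n := one_mul _
    have hsum_abs : ∀ (h : X →L[ℝ] ℝ) k,
        |h (xs k)| ≤ ∑ n ∈ S k, |t k n * h (v n)| := by
      intro h k
      rw [hrep k, map_sum]
      refine (Finset.abs_sum_le_sum_abs _ _).trans_eq ?_
      apply Finset.sum_congr rfl
      intro n _
      rw [map_smul, smul_eq_mul]
    have hI1 : ∀ (h : X →L[ℝ] ℝ), ‖h‖ ≤ 1 → ∀ k, |h (xs k)| ≤ 1 - s k := by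
      intro h hh k
      refine (hsum_abs h k).trans ?_
      calc ∑ n ∈ S k, |t k n * h (v n)| ≤ ∑ n ∈ S k, t k n * (1 - εr n) :=
            Finset.sum_le_sum fun n hn => hterm h hh k n hn
      _ = ∑ n ∈ S k, (t k n - t k n * εr n) := by
            apply Finset.sum_congr rfl; intro n _; ring
      _ = (∑ n ∈ S k, t k n) - ∑ n ∈ S k, t k n * εr n := Finset.sum_sub_distrib _ _
      _ = 1 - s k := by rw [ht1 k, hs]
    have hI2 : ∀ (m : ℕ) (h : X →L[ℝ] ℝ), ‖h‖ ≤ 1 →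
        (∀ n, m < n → h (ee hinf n) = 0) →
        ∀ k, |h (xs k)| ≤ ((m : ℝ) + 2) * s k := by
      intro m h hh hkill k
      refine (hsum_abs h k).trans ?_
      have hterm2 : ∀ n ∈ S k, |t k n * h (v n)| ≤ ((m : ℝ) + 2) * (t k n * εr n) := by
        intro n hn
        by_cases hnm : m < n
        · have : h (v n) = 0 := by
            rw [hv]
            simp only [map_smul, smul_eq_mul, hkill n hnm, mul_zero]
          rw [this, mul_zero, abs_zero]
          exact mul_nonneg (by positivity) (mul_nonneg (ht0 k n hn) (hε_pos n).le)
        · push_neg at hnm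
          have h1 : |t k n * h (v n)| ≤ t k n * (1 - εr n) := hterm h hh k n hn
          have h2 : t k n * (1 - εr n) ≤ t k n := by
            have := hε_pos n
            nlinarith [ht0 k n hn]
          have h3 : (1 : ℝ) ≤ ((m : ℝ) + 2) * εr n := by
            rw [hεr]
            rw [mul_one_div, le_div_iff₀ (by positivity)]
            have : (n : ℝ) ≤ (m : ℝ) := Nat.cast_le.2 hnm
            linarith
          have h4 : t k n ≤ ((m : ℝ) + 2) * (t k n * εr n) := by
            calc t k n = t k n * 1 := (mul_one _).symm
            _ ≤ t k n * (((m : ℝ) + 2) * εr n) :=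
                mul_le_mul_of_nonneg_left h3 (ht0 k n hn)
            _ = ((m : ℝ) + 2) * (t k n * εr n) := by ring
          linarith
      calc ∑ n ∈ S k, |t k n * h (v n)| ≤ ∑ n ∈ S k, ((m : ℝ) + 2) * (t k n * εr n) :=
            Finset.sum_le_sum hterm2
      _ = ((m : ℝ) + 2) * s k := by rw [hs, ← Finset.mul_sum]
    have hxY := hKspan hxK
    by_cases hA : ∃ c > 0, ∀ k₀ : ℕ, ∃ k ≥ k₀, c ≤ s k
    · obtain ⟨c, hc, hfreq⟩ := hA
      have hhx : ∀ m, ∀ h ∈ Hm hinf m, |h x| ≤ 1 - c := by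
        intro m h hh
        refine le_of_forall_pos_le_add ?_
        intro η hη
        obtain ⟨k₀, hk₀⟩ := Metric.tendsto_atTop.1 hlim η hη
        obtain ⟨k, hkk, hck⟩ := hfreq k₀
        have hd : ‖x - xs k‖ < η := by
          have := hk₀ k hkk
          rwa [dist_comm, dist_eq_norm] at this
        have hh1 : ‖h‖ ≤ 1 := Hm_norm_le hinf m h hh
        have h5 : |h x - h (xs k)| ≤ ‖x - xs k‖ := by
          calc |h x - h (xs k)| = |h (x - xs k)| := by rw [map_sub]
          _ ≤ ‖h‖ * ‖x - xs k‖ := h.le_opNorm _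
          _ ≤ 1 * ‖x - xs k‖ := mul_le_mul_of_nonneg_right hh1 (norm_nonneg _)
          _ = ‖x - xs k‖ := one_mul _
        have h6 : |h (xs k)| ≤ 1 - s k := hI1 h hh1 k
        have := abs_sub_abs_le_abs_sub (h x) (h (xs k))
        have hsk : s k ≥ c := hck
        linarith
      have hxle : ‖x‖ ≤ 1 - c := by
        refine le_of_forall_pos_le_add ?_
        intro δ hδ
        obtain ⟨m, h, hh, hxh⟩ := totality hinf x hxY δ hδ
        have := hhx m h hh
        linarith
      linarith
    · push_neg at hA
      have hhx0 : ∀ m, ∀ h ∈ Hm hinf m, h x = 0 := by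
        intro m h hh
        have habs : |h x| ≤ 0 := by
          refine le_of_forall_pos_le_add ?_
          intro η hη
          have hc : (0:ℝ) < η / (2 * ((m : ℝ) + 2)) := by positivity
          obtain ⟨k₀, hk₀⟩ := hA (η / (2 * ((m : ℝ) + 2))) hc
          obtain ⟨k₁, hk₁⟩ := Metric.tendsto_atTop.1 hlim (η / 2) (by linarith)
          set k := max k₀ k₁ with hkdef
          have hsk : s k < η / (2 * ((m : ℝ) + 2)) := hk₀ k (le_max_left _ _)
          have hd : ‖x - xs k‖ < η / 2 := by
            have := hk₁ k (le_max_right _ _)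
            rwa [dist_comm, dist_eq_norm] at this
          have hh1 : ‖h‖ ≤ 1 := Hm_norm_le hinf m h hh
          have hkill : ∀ n, m < n → h (ee hinf n) = 0 := fun n hn =>
            Hm_kills hinf hn h hh
          have h6 : |h (xs k)| ≤ ((m : ℝ) + 2) * s k := hI2 m h hh1 hkill k
          have h5 : |h x - h (xs k)| ≤ ‖x - xs k‖ := by
            calc |h x - h (xs k)| = |h (x - xs k)| := by rw [map_sub]
            _ ≤ ‖h‖ * ‖x - xs k‖ := h.le_opNorm _
            _ ≤ 1 * ‖x - xs k‖ := mul_le_mul_of_nonneg_right hh1 (norm_nonneg _)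
            _ = ‖x - xs k‖ := one_mul _
          have h7 : ((m : ℝ) + 2) * s k < η / 2 := by
            have h8 : ((m : ℝ) + 2) * s k < ((m : ℝ) + 2) * (η / (2 * ((m : ℝ) + 2))) :=
              mul_lt_mul_of_pos_left hsk (by positivity)
            have h9 : ((m : ℝ) + 2) * (η / (2 * ((m : ℝ) + 2))) = η / 2 := by
              field_simp
            linarith
          have := abs_sub_abs_le_abs_sub (h x) (h (xs k))
          linarith
        have := abs_nonneg (h x)
        have : |h x| = 0 := le_antisymm habs this
        exact abs_eq_zero.1 this
      have hx0 : ‖x‖ ≤ 0 := by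
        refine le_of_forall_pos_le_add ?_
        intro δ hδ
        obtain ⟨m, h, hh, hxh⟩ := totality hinf x hxY δ hδ
        rw [hhx0 m h hh] at hxh
        simpa using hxh
      have : ‖x‖ = 0 := le_antisymm hx0 (norm_nonneg x)
      rw [this]
      norm_num
  -- sSup of norms is 1
  have hv0K : v 0 ∈ K := hv_mem 0
  have hAne : ((fun k => ‖k‖) '' K).Nonempty := ⟨‖v 0‖, Set.mem_image_of_mem _ hv0K⟩
  have hub : ∀ a ∈ (fun k => ‖k‖) '' K, a ≤ 1 := by
    rintro _ ⟨k, hk, rfl⟩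
    have := hKsub hk
    rwa [Metric.mem_closedBall, dist_zero_right] at this
  have hbdd : BddAbove ((fun k => ‖k‖) '' K) := ⟨1, fun a ha => hub a ha⟩
  have hsup_le : sSup ((fun k => ‖k‖) '' K) ≤ 1 := csSup_le hAne hub
  have hsup : sSup ((fun k => ‖k‖) '' K) = 1 := by
    refine le_antisymm hsup_le ?_
    by_contra hlt
    push_neg at hlt
    set σ := sSup ((fun k => ‖k‖) '' K) with hσ
    have hσ1 : 0 < 1 - σ := by linarith
    obtain ⟨n, hn⟩ := exists_nat_gt (1 / (1 - σ))
    have hvn : ‖v n‖ ≤ σ := le_csSup hbdd (Set.mem_image_of_mem _ (hv_mem n))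
    rw [hvnorm n] at hvn
    have hεn : εr n < 1 - σ := by
      rw [hεr]
      rw [div_lt_iff₀ (by positivity)]
      have h1 : 1 / (1 - σ) * (1 - σ) = 1 := by field_simp
      have h2 : (1 / (1 - σ)) * (1 - σ) < (n : ℝ) * (1 - σ) :=
        mul_lt_mul_of_pos_right hn hσ1
      nlinarith [Nat.cast_nonneg (α := ℝ) n]
    linarith
  refine ⟨K, ⟨v 0, hv0K⟩, isClosed_closure, ?_, (convex_convexHull ℝ _).closure, hKsub,
    hsup, hmain, ?_⟩
  · exact (Metric.isBounded_closedBall (x := (0:X)) (r := 1)).subset hKsub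
  · rintro ⟨p, hpK, hp⟩
    have himg : (fun t => ‖(0:X) - t‖) '' K = (fun k => ‖k‖) '' K := by
      apply Set.image_congr
      intro a _
      rw [zero_sub, norm_neg]
    rw [himg, hsup, zero_sub, norm_neg] at hp
    exact absurd hp (ne_of_lt (hmain p hpK))
end

section
/- For every infinite-dimensional Banach space X there is a closed convex set K contained in the open unit ball of X such that sup{‖x‖ : x ∈ K} = 1. -/
set_option maxHeartbeats 1000000

open Metric Set

section NNauxStmt13

variable {X : Type*} [NormedAddCommGroup X] [NormedSpace ℝ X]

/-- Auxiliary seminorm built from a sequence of functionals. -/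
noncomputable def NNaux (f : ℕ → X →L[ℝ] ℝ) (x : X) : ℝ := ∑' k, (1/2:ℝ)^k * ‖f k x‖

lemma NNaux_summable (f : ℕ → X →L[ℝ] ℝ) (hf : ∀ k, ‖f k‖ ≤ 1) (x : X) :
    Summable fun k => (1/2:ℝ)^k * ‖f k x‖ := by
  refine Summable.of_nonneg_of_le (fun k => by positivity)
    (fun k => ?_) ((summable_geometric_of_lt_one (r := (1/2:ℝ)) (by norm_num) (by norm_num)).mul_right ‖x‖)
  have := (f k).le_opNorm x
  have h2 : ‖f k x‖ ≤ ‖x‖ := this.trans (by nlinarith [hf k, norm_nonneg x])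
  have : (0:ℝ) ≤ (1/2:ℝ)^k := by positivity
  nlinarith

lemma NNaux_nonneg (f : ℕ → X →L[ℝ] ℝ) (x : X) : 0 ≤ NNaux f x :=
  tsum_nonneg (fun k => by positivity)

lemma NNaux_le (f : ℕ → X →L[ℝ] ℝ) (hf : ∀ k, ‖f k‖ ≤ 1) (x : X) : NNaux f x ≤ 2 * ‖x‖ := by
  have h1 : NNaux f x ≤ ∑' k, (1/2:ℝ)^k * ‖x‖ := by
    apply Summable.tsum_le_tsum (fun k => ?_) (NNaux_summable f hf x)
      ((summable_geometric_of_lt_one (r := (1/2:ℝ)) (by norm_num) (by norm_num)).mul_right ‖x‖)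
    have := (f k).le_opNorm x
    have h2 : ‖f k x‖ ≤ ‖x‖ := this.trans (by nlinarith [hf k, norm_nonneg x])
    have : (0:ℝ) ≤ (1/2:ℝ)^k := by positivity
    nlinarith
  rw [tsum_mul_right, tsum_geometric_two] at h1
  linarith

lemma NNaux_add (f : ℕ → X →L[ℝ] ℝ) (hf : ∀ k, ‖f k‖ ≤ 1) (x y : X) :
    NNaux f (x + y) ≤ NNaux f x + NNaux f y := by
  unfold NNaux
  rw [← Summable.tsum_add (NNaux_summable f hf x) (NNaux_summable f hf y)]
  apply Summable.tsum_le_tsum (fun k => ?_) (NNaux_summable f hf _)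
    ((NNaux_summable f hf x).add (NNaux_summable f hf y))
  rw [← mul_add]
  have : ‖f k (x + y)‖ ≤ ‖f k x‖ + ‖f k y‖ := by
    rw [map_add]; exact norm_add_le _ _
  have h2 : (0:ℝ) ≤ (1/2:ℝ)^k := by positivity
  nlinarith

lemma NNaux_smul (f : ℕ → X →L[ℝ] ℝ) (a : ℝ) (x : X) :
    NNaux f (a • x) = |a| * NNaux f x := by
  unfold NNaux
  rw [← tsum_mul_left]
  congr 1 with k
  rw [map_smul]
  simp [norm_smul, Real.norm_eq_abs]
  ring

lemma NNaux_zero (f : ℕ → X →L[ℝ] ℝ) : NNaux f 0 = 0 := by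
  have := NNaux_smul f 0 (0 : X)
  simpa using this

lemma NNaux_continuous (f : ℕ → X →L[ℝ] ℝ) (hf : ∀ k, ‖f k‖ ≤ 1) :
    Continuous (NNaux f) := by
  have key : ∀ x y : X, NNaux f x - NNaux f y ≤ 2 * ‖x - y‖ := by
    intro x y
    have h1 : NNaux f x ≤ NNaux f y + NNaux f (x - y) := by
      have := NNaux_add f hf y (x - y)
      simpa using this
    have := NNaux_le f hf (x - y)
    linarith
  apply (LipschitzWith.of_dist_le_mul (K := 2) ?_).continuous
  intro x y
  rw [Real.dist_eq, dist_eq_norm]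
  rcases abs_cases (NNaux f x - NNaux f y) with ⟨h, _⟩ | ⟨h, _⟩ <;> rw [h]
  · have := key x y; push_cast; linarith
  · have := key y x
    rw [← norm_neg] at this
    simp only [neg_sub] at this
    push_cast; linarith

end NNauxStmt13

/-- For every infinite-dimensional Banach space `X` there is a closed
convex set `K` contained in the open unit ball of `X` with `sup {‖x‖ : x ∈ K} = 1`. -/
theorem stmt13 {X : Type*} [NormedAddCommGroup X] [NormedSpace ℝ X] [CompleteSpace X]
    (hinf : ¬ FiniteDimensional ℝ X) :
    ∃ K : Set X, IsClosed K ∧ Convex ℝ K ∧ K ⊆ Metric.ball (0 : X) 1 ∧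
      sSup ((fun x => ‖x‖) '' K) = 1 := by
  classical
  -- an infinite linearly independent family
  obtain ⟨u, hu⟩ : ∃ u : ℕ → X, LinearIndependent ℝ u := by
    have hb := Module.Basis.ofVectorSpace ℝ X
    haveI : Infinite (Module.Basis.ofVectorSpaceIndex ℝ X) := by
      rw [Set.infinite_coe_iff]
      intro hfin
      haveI := hfin.fintype
      exact hinf (Module.Finite.of_basis hb)
    exact ⟨hb ∘ (Infinite.natEmbedding _),
      hb.linearIndependent.comp _ (Infinite.natEmbedding _).injective⟩
  set Y : Submodule ℝ X := (Submodule.span ℝ (Set.range u)).topologicalClosure with hYdef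
  have hYclosed : IsClosed (Y : Set X) := Submodule.isClosed_topologicalClosure _
  have huY : ∀ n, u n ∈ Y :=
    fun n => Submodule.le_topologicalClosure _ (Submodule.subset_span (mem_range_self n))
  -- a countable dense sequence in Y
  obtain ⟨d, hd⟩ : ∃ d : ℕ → X, (Y : Set X) ⊆ closure (Set.range d) := by
    have hsep : TopologicalSpace.IsSeparable (Y : Set X) := by
      have h1 : TopologicalSpace.IsSeparable
          ((Submodule.span ℝ (Set.range u) : Submodule ℝ X) : Set X) :=
        TopologicalSpace.IsSeparable.span (Set.countable_range u).isSeparable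
      exact h1.closure
    obtain ⟨c, hc_count, hc_sub⟩ := hsep
    rcases c.eq_empty_or_nonempty with rfl | hne
    · have h0 : (0:X) ∈ (Y : Set X) := Y.zero_mem
      have := hc_sub h0
      simp at this
    · obtain ⟨d, rfl⟩ := Set.Countable.exists_eq_range hc_count hne
      exact ⟨d, hc_sub⟩
  -- norming functionals
  have hdual : ∀ k : ℕ, ∃ g : X →L[ℝ] ℝ, ‖g‖ ≤ 1 ∧ g (d k) = ‖d k‖ := fun k =>
    exists_dual_vector'' ℝ (d k)
  choose f hf1 hf2 using hdual
  set N : X → ℝ := NNaux f with hNdef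
  -- totality of N on Y
  have htotal : ∀ x ∈ Y, ‖x‖ = 1 → 0 < N x := by
    intro x hxY hx1
    rcases lt_or_ge 0 (N x) with h | h
    · exact h
    have hN0 : N x = 0 := le_antisymm h (NNaux_nonneg f x)
    have hterm : ∀ k, f k x = 0 := by
      intro k
      have h1 : (1/2:ℝ)^k * ‖f k x‖ ≤ N x :=
        Summable.le_tsum (NNaux_summable f hf1 x) k (fun j _ => by positivity)
      rw [hN0] at h1
      have h2 : (0:ℝ) < (1/2:ℝ)^k := by positivity
      have h3 : ‖f k x‖ ≤ 0 := by nlinarith [norm_nonneg (f k x)]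
      simpa using le_antisymm h3 (norm_nonneg _)
    -- pick a close point of the dense sequence
    have hx_cl : x ∈ closure (Set.range d) := hd hxY
    rw [Metric.mem_closure_iff] at hx_cl
    obtain ⟨b, ⟨k, rfl⟩, hbx⟩ := hx_cl (1/3) (by norm_num)
    have h4 : f k (d k - x) = ‖d k‖ := by
      rw [map_sub, hterm k, hf2 k]; ring
    have h5 : ‖f k (d k - x)‖ ≤ ‖d k - x‖ := by
      have := (f k).le_opNorm (d k - x)
      nlinarith [hf1 k, norm_nonneg (d k - x)]
    have h6 : ‖d k - x‖ < 1/3 := by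
      rw [dist_eq_norm] at hbx
      rw [← norm_neg]
      simpa [neg_sub] using hbx
    have h7 : ‖d k‖ ≤ ‖f k (d k - x)‖ := by
      rw [h4]; exact le_abs_self _
    have h8 : (1:ℝ) - 1/3 ≤ ‖d k‖ := by
      have := norm_sub_norm_le x (d k)
      have h9 : ‖x - d k‖ < 1/3 := by
        rw [dist_eq_norm] at hbx; exact hbx
      rw [hx1] at this
      linarith
    linarith
  -- the key density-of-norms claim
  have hkey : ∀ ε : ℝ, 0 < ε → ∃ x ∈ Y, ‖x‖ = 1 ∧ N x < ε := by
    by_contra hcon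
    push_neg at hcon
    obtain ⟨ε, hε, hcon⟩ := hcon
    have hscale : ∀ x ∈ Y, ε * ‖x‖ ≤ N x := by
      intro x hx
      rcases eq_or_ne x 0 with rfl | hx0
      · simp [hNdef, NNaux_zero]
      · have h1 : (‖x‖⁻¹ : ℝ) • x ∈ Y := Y.smul_mem _ hx
        have h2 : ‖(‖x‖⁻¹ : ℝ) • x‖ = 1 := norm_smul_inv_norm hx0
        have h3 := hcon _ h1 h2
        rw [hNdef, NNaux_smul, abs_inv, abs_norm] at h3
        have hxn : (0:ℝ) < ‖x‖ := norm_pos_iff.2 hx0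
        rw [le_inv_mul_iff₀ hxn] at h3
        rw [hNdef]
        nlinarith
    -- total boundedness of the unit ball of Y
    have htb : TotallyBounded ((Y : Set X) ∩ closedBall (0:X) 1) := by
      rw [totallyBounded_iff]
      intro δ hδ
      obtain ⟨M, hM⟩ : ∃ M : ℕ, (1/2:ℝ)^M * 4 < ε * δ / 2 := by
        obtain ⟨M, hM⟩ := exists_pow_lt_of_lt_one
          (show (0:ℝ) < ε*δ/8 by positivity) (by norm_num : (1/2:ℝ) < 1)
        exact ⟨M, by nlinarith⟩
      set δ' : ℝ := ε * δ / 8 with hδ'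
      have hδ'pos : 0 < δ' := by positivity
      set C : Set X := (Y : Set X) ∩ closedBall (0:X) 1 with hC
      -- key estimate
      have hest : ∀ x ∈ C, ∀ z ∈ C,
          (∀ k : Fin M, ‖f k x - f k z‖ < δ') → dist x z < δ := by
        intro x hx z hz hk
        have hxz : x - z ∈ Y := Y.sub_mem hx.1 hz.1
        have h1 : ε * ‖x - z‖ ≤ N (x - z) := hscale _ hxz
        have hsumm := NNaux_summable f hf1 (x - z)
        have hsplit : (∑ k ∈ Finset.range M, (1/2:ℝ)^k * ‖f k (x-z)‖)
            + (∑' k : ℕ, (1/2:ℝ)^(k+M) * ‖f (k+M) (x-z)‖) = N (x-z) :=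
          Summable.sum_add_tsum_nat_add M hsumm
        have hnorm2 : ‖x - z‖ ≤ 2 := by
          have hx2 : ‖x‖ ≤ 1 := mem_closedBall_zero_iff.1 hx.2
          have hz2 : ‖z‖ ≤ 1 := mem_closedBall_zero_iff.1 hz.2
          calc ‖x - z‖ ≤ ‖x‖ + ‖z‖ := norm_sub_le _ _
            _ ≤ 2 := by linarith
        have hhead : (∑ k ∈ Finset.range M, (1/2:ℝ)^k * ‖f k (x-z)‖) ≤ 2 * δ' := by
          have hstep : ∀ k ∈ Finset.range M, (1/2:ℝ)^k * ‖f k (x-z)‖ ≤ (1/2:ℝ)^k * δ' := by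
            intro k hkM
            have hkM' : k < M := Finset.mem_range.1 hkM
            have := hk ⟨k, hkM'⟩
            rw [map_sub]
            have h2 : (0:ℝ) ≤ (1/2:ℝ)^k := by positivity
            nlinarith
          calc (∑ k ∈ Finset.range M, (1/2:ℝ)^k * ‖f k (x-z)‖)
              ≤ ∑ k ∈ Finset.range M, (1/2:ℝ)^k * δ' := Finset.sum_le_sum hstep
            _ = (∑ k ∈ Finset.range M, (1/2:ℝ)^k) * δ' := by rw [Finset.sum_mul]
            _ ≤ 2 * δ' := by
                have hgeo : (∑ k ∈ Finset.range M, (1/2:ℝ)^k) ≤ 2 := by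
                  have := sum_geometric_two_le M
                  linarith [this]
                nlinarith
        have htail : (∑' k : ℕ, (1/2:ℝ)^(k+M) * ‖f (k+M) (x-z)‖) ≤ (1/2:ℝ)^M * 4 := by
          have hs1 : Summable fun k : ℕ => (1/2:ℝ)^(k+M) * ‖f (k+M) (x-z)‖ :=
            (summable_nat_add_iff M).2 hsumm
          have hs2 : Summable fun k : ℕ => (1/2:ℝ)^k * ((1/2:ℝ)^M * 2) :=
            (summable_geometric_of_lt_one (r := (1/2:ℝ)) (by norm_num) (by norm_num)).mul_right _
          have hle : (∑' k : ℕ, (1/2:ℝ)^(k+M) * ‖f (k+M) (x-z)‖)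
              ≤ ∑' k : ℕ, (1/2:ℝ)^k * ((1/2:ℝ)^M * 2) := by
            apply Summable.tsum_le_tsum (fun k => ?_) hs1 hs2
            have hb : ‖f (k+M) (x-z)‖ ≤ 2 := by
              have := (f (k+M)).le_opNorm (x-z)
              nlinarith [hf1 (k+M), norm_nonneg (x-z)]
            have h2 : (0:ℝ) ≤ (1/2:ℝ)^k := by positivity
            have h3 : (0:ℝ) ≤ (1/2:ℝ)^M := by positivity
            have hnn : (0:ℝ) ≤ ‖f (k+M) (x-z)‖ := norm_nonneg _
            calc (1/2:ℝ)^(k+M) * ‖f (k+M) (x-z)‖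
                = (1/2:ℝ)^k * ((1/2:ℝ)^M * ‖f (k+M) (x-z)‖) := by rw [pow_add]; ring
              _ ≤ (1/2:ℝ)^k * ((1/2:ℝ)^M * 2) := by gcongr
          rw [tsum_mul_right, tsum_geometric_two] at hle
          linarith [hle]
        have hcomb : ε * ‖x - z‖ < ε * δ := by
          have : N (x - z) ≤ 2 * δ' + (1/2:ℝ)^M * 4 := by
            rw [← hsplit]; linarith
          have h2 : 2 * δ' = ε * δ / 4 := by rw [hδ']; ring
          nlinarith
        rw [dist_eq_norm]
        nlinarith
      -- the finite-dimensional projection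
      set Φ : X → (Fin M → ℝ) := fun x k => f k x with hΦ
      have himgtb : TotallyBounded (Φ '' C) := by
        apply TotallyBounded.subset ?_ (isCompact_closedBall (0 : Fin M → ℝ) 1).totallyBounded
        rintro _ ⟨x, hx, rfl⟩
        rw [mem_closedBall_zero_iff, pi_norm_le_iff_of_nonneg zero_le_one]
        intro k
        have hx2 : ‖x‖ ≤ 1 := mem_closedBall_zero_iff.1 hx.2
        have := (f k).le_opNorm x
        have := hf1 (k : ℕ)
        simp only [hΦ]
        nlinarith [norm_nonneg x]
      obtain ⟨t, htsub, htfin, hcov⟩ := finite_approx_of_totallyBounded himgtb δ' hδ'pos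
      set g : (Fin M → ℝ) → X := fun y =>
        if h : ∃ x, x ∈ C ∧ Φ x = y then h.choose else 0 with hg
      refine ⟨g '' t, htfin.image g, ?_⟩
      intro x hx
      have hΦx : Φ x ∈ ⋃ y ∈ t, ball y δ' := hcov (mem_image_of_mem Φ hx)
      rw [mem_iUnion₂] at hΦx
      obtain ⟨y, hyt, hyb⟩ := hΦx
      have hex : ∃ x', x' ∈ C ∧ Φ x' = y := by
        have := htsub hyt
        rwa [mem_image] at this
      have hgy : g y = hex.choose := by rw [hg]; simp [hex]
      have hzC : g y ∈ C := by rw [hgy]; exact hex.choose_spec.1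
      have hzΦ : Φ (g y) = y := by rw [hgy]; exact hex.choose_spec.2
      rw [mem_iUnion₂]
      refine ⟨g y, mem_image_of_mem g hyt, ?_⟩
      rw [mem_ball]
      apply hest x hx (g y) hzC
      intro k
      have hdist : dist (Φ x) (Φ (g y)) < δ' := by rw [hzΦ]; exact hyb
      rw [dist_pi_lt_iff hδ'pos] at hdist
      have := hdist k
      rw [Real.dist_eq] at this
      simpa [hΦ, Real.norm_eq_abs] using this
    -- hence the unit ball of Y is compact and Y is finite dimensional
    have hCcomp : IsCompact ((Y : Set X) ∩ closedBall (0:X) 1) :=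
      TotallyBounded.isCompact_of_isClosed htb (hYclosed.inter isClosed_closedBall)
    haveI : FiniteDimensional ℝ ↥Y := by
      apply FiniteDimensional.of_isCompact_closedBall₀ ℝ (zero_lt_one)
        (r := 1)
      have himg : (Subtype.val '' (closedBall (0 : ↥Y) 1))
          = (Y : Set X) ∩ closedBall (0:X) 1 := by
        ext x
        constructor
        · rintro ⟨⟨x, hxY⟩, hxb, rfl⟩
          refine ⟨hxY, ?_⟩
          rw [mem_closedBall_zero_iff] at hxb ⊢
          simpa using hxb
        · rintro ⟨hxY, hxb⟩
          refine ⟨⟨x, hxY⟩, ?_, rfl⟩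
          rw [mem_closedBall_zero_iff] at hxb ⊢
          simpa using hxb
      exact Topology.IsInducing.subtypeVal.isCompact_iff.mpr (himg ▸ hCcomp)
    have hu' : LinearIndependent ℝ (fun n => (⟨u n, huY n⟩ : ↥Y)) :=
      LinearIndependent.of_comp Y.subtype hu
    exact Module.Finite.not_linearIndependent_of_infinite _ hu'
  -- the candidate set
  refine ⟨(Y : Set X) ∩ {x | ‖x‖ + N x ≤ 1}, ?_, ?_, ?_, ?_⟩
  · exact hYclosed.inter (isClosed_le (continuous_norm.add (NNaux_continuous f hf1))
      continuous_const)
  · intro x hx y hy a b ha hb hab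
    refine ⟨Y.add_mem (Y.smul_mem a hx.1) (Y.smul_mem b hy.1), ?_⟩
    have hx2 : ‖x‖ + N x ≤ 1 := hx.2
    have hy2 : ‖y‖ + N y ≤ 1 := hy.2
    have h1 : ‖a • x + b • y‖ ≤ a * ‖x‖ + b * ‖y‖ := by
      calc ‖a • x + b • y‖ ≤ ‖a • x‖ + ‖b • y‖ := norm_add_le _ _
        _ = a * ‖x‖ + b * ‖y‖ := by rw [norm_smul, norm_smul,
            Real.norm_eq_abs, Real.norm_eq_abs, abs_of_nonneg ha, abs_of_nonneg hb]
    have h2 : N (a • x + b • y) ≤ a * N x + b * N y := by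
      calc N (a • x + b • y) ≤ N (a • x) + N (b • y) := NNaux_add f hf1 _ _
        _ = a * N x + b * N y := by
            rw [hNdef, NNaux_smul, NNaux_smul, abs_of_nonneg ha, abs_of_nonneg hb]
    have hNx := NNaux_nonneg f x
    have hNy := NNaux_nonneg f y
    simp only [mem_setOf_eq]
    nlinarith
  · rintro x ⟨hxY, hxle⟩
    simp only [mem_setOf_eq] at hxle
    have hN0 : 0 ≤ N x := NNaux_nonneg f x
    have h1 : ‖x‖ ≤ 1 := by linarith
    rw [mem_ball, dist_zero_right]
    rcases lt_or_eq_of_le h1 with h | h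
    · exact h
    · exact absurd (htotal x hxY h) (by rw [h] at hxle; linarith)
  · -- the supremum is 1
    have h0K : (0:X) ∈ (Y : Set X) ∩ {x | ‖x‖ + N x ≤ 1} :=
      ⟨Y.zero_mem, by simp [hNdef, NNaux_zero]⟩
    have hne : ((fun x => ‖x‖) '' ((Y : Set X) ∩ {x | ‖x‖ + N x ≤ 1})).Nonempty :=
      ⟨0, 0, h0K, by simp⟩
    have hub : ∀ r ∈ (fun x => ‖x‖) '' ((Y : Set X) ∩ {x | ‖x‖ + N x ≤ 1}), r ≤ 1 := by
      rintro r ⟨x, ⟨_, hx2⟩, rfl⟩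
      have := NNaux_nonneg f x
      simp only [mem_setOf_eq] at hx2
      linarith
    have hbdd : BddAbove ((fun x => ‖x‖) '' ((Y : Set X) ∩ {x | ‖x‖ + N x ≤ 1})) :=
      ⟨1, hub⟩
    apply le_antisymm
    · exact csSup_le hne hub
    · apply le_of_forall_pos_le_add
      intro η hη
      set ε' : ℝ := min (η/2) (1/2) with hε'
      have hε'pos : 0 < ε' := by
        apply lt_min <;> linarith
      have hε'le : ε' ≤ 1/2 := min_le_right _ _
      have hε'η : ε' ≤ η/2 := min_le_left _ _
      obtain ⟨x, hxY, hx1, hxN⟩ := hkey ε' hε'pos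
      have hyK : (1 - ε') • x ∈ (Y : Set X) ∩ {x | ‖x‖ + N x ≤ 1} := by
        refine ⟨Y.smul_mem _ hxY, ?_⟩
        simp only [mem_setOf_eq]
        rw [norm_smul, Real.norm_eq_abs, abs_of_nonneg (by linarith : (0:ℝ) ≤ 1 - ε'), hx1,
          hNdef, NNaux_smul, abs_of_nonneg (by linarith : (0:ℝ) ≤ 1 - ε')]
        have hNx : 0 ≤ NNaux f x := NNaux_nonneg f x
        rw [hNdef] at hxN
        nlinarith
      have hnorm : ‖(1 - ε') • x‖ = 1 - ε' := by
        rw [norm_smul, Real.norm_eq_abs, abs_of_nonneg (by linarith : (0:ℝ) ≤ 1 - ε'), hx1,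
          mul_one]
      have hle : 1 - ε' ≤ sSup ((fun x => ‖x‖) '' ((Y : Set X) ∩ {x | ‖x‖ + N x ≤ 1})) := by
        rw [← hnorm]
        exact le_csSup hbdd ⟨_, hyK, rfl⟩
      linarith
end

section
/- Let K ⊆ X* be a weak*-compact convex set, μ a Radon probability measure on K with barycenter x₀* ∈ K (so x₀*(x) = ∫_K k(x) dμ(k) for all x ∈ X), and suppose μ(E) = 1 for a weak*-closed subset E ⊆ K. If ‖x₀*‖ = M where M = sup{‖e‖ : e ∈ E}, then ‖k‖ = M for μ-almost every k ∈ E; in particular there exists e ∈ E with ‖e‖ = M. -/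
open WeakDual MeasureTheory

/-- Let `K ⊆ X*` be weak*-compact convex, `μ` a Radon (inner regular)
probability measure on `X*` carried by `K`, with barycenter `x₀* ∈ K` (i.e.
`x₀*(x) = ∫_K k(x) dμ(k)` for all `x ∈ X`), and suppose `μ(E) = 1` for a weak*-closed
subset `E ⊆ K`. If `‖x₀*‖ = M := sup {‖e‖ : e ∈ E}`, then `‖k‖ = M` for `μ`-almost every
`k ∈ E`; in particular some `e ∈ E` has `‖e‖ = M`. -/
theorem stmt15 {X : Type*} [NormedAddCommGroup X] [NormedSpace ℝ X] [CompleteSpace X]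
    [MeasurableSpace (WeakDual ℝ X)] [BorelSpace (WeakDual ℝ X)]
    (K : Set (WeakDual ℝ X)) (hK : IsCompact K) (hKcvx : Convex ℝ K)
    (E : Set (WeakDual ℝ X)) (hEK : E ⊆ K) (hEcl : IsClosed E) (hEne : E.Nonempty)
    (μ : Measure (WeakDual ℝ X)) [IsProbabilityMeasure μ] [μ.InnerRegular]
    (hμK : μ K = 1) (hμE : μ E = 1)
    (x₀ : WeakDual ℝ X) (hx₀K : x₀ ∈ K)
    (hbary : ∀ x : X, x₀ x = ∫ k, k x ∂μ)
    (hM : ‖toStrongDual x₀‖ = sSup ((fun e => ‖toStrongDual e‖) '' E)) :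
    (∀ᵐ k ∂μ, k ∈ E → ‖toStrongDual k‖ = sSup ((fun e => ‖toStrongDual e‖) '' E)) ∧
      ∃ e ∈ E, ‖toStrongDual e‖ = sSup ((fun e => ‖toStrongDual e‖) '' E) := by
  set M : ℝ := sSup ((fun e => ‖toStrongDual e‖) '' E) with hMdef
  set g : WeakDual ℝ X → ℝ := fun k => ‖toStrongDual k‖ with hg
  -- uniform bound on K via Banach–Steinhaus
  obtain ⟨C, hC⟩ : ∃ C, ∀ k : K, ‖toStrongDual (k : WeakDual ℝ X)‖ ≤ C := by
    apply banach_steinhaus (g := fun k : K => toStrongDual (k : WeakDual ℝ X))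
    intro x
    have hcont : Continuous fun k : WeakDual ℝ X => k x := WeakDual.eval_continuous x
    obtain ⟨B, hB⟩ := (hK.image (continuous_norm.comp hcont)).bddAbove
    exact ⟨B, fun i => hB ⟨i, i.2, rfl⟩⟩
  have hbdd : BddAbove ((fun e => ‖toStrongDual e‖) '' E) := by
    refine ⟨C, ?_⟩
    rintro - ⟨e, he, rfl⟩
    exact hC ⟨e, hEK he⟩
  have hle : ∀ e ∈ E, g e ≤ M := fun e he => le_csSup hbdd ⟨e, he, rfl⟩
  -- measurability of g (lower semicontinuity)
  have hgmeas : Measurable g := by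
    apply LowerSemicontinuous.measurable
    rw [lowerSemicontinuous_iff_isClosed_preimage]
    intro c
    have : g ⁻¹' Set.Iic c = toStrongDual ⁻¹' Metric.closedBall 0 c := by
      ext k
      simp [hg, Metric.mem_closedBall, dist_zero_right]
    rw [this]
    exact WeakDual.isClosed_closedBall 0 c
  -- almost everywhere in E and K
  have haeE : ∀ᵐ k ∂μ, k ∈ E := by
    rw [MeasureTheory.ae_iff]
    have : {k | ¬ k ∈ E} = Eᶜ := rfl
    rw [this, (prob_compl_eq_zero_iff hEcl.measurableSet)]
    exact hμE
  -- g is integrable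
  have hgnonneg : ∀ k, 0 ≤ g k := fun k => norm_nonneg _
  have hIntg : Integrable g μ := by
    refine Integrable.mono' (integrable_const C) hgmeas.aestronglyMeasurable ?_
    filter_upwards [haeE] with k hk
    rw [Real.norm_of_nonneg (hgnonneg k)]
    exact hC ⟨k, hEK hk⟩
  -- evaluations are integrable
  have hInt_eval : ∀ x : X, Integrable (fun k : WeakDual ℝ X => k x) μ := by
    intro x
    refine Integrable.mono' (integrable_const (C * ‖x‖))
      (WeakDual.eval_continuous x).aestronglyMeasurable ?_
    filter_upwards [haeE] with k hk
    calc ‖k x‖ ≤ ‖toStrongDual k‖ * ‖x‖ := (toStrongDual k).le_opNorm x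
    _ ≤ C * ‖x‖ := by
        exact mul_le_mul_of_nonneg_right (hC ⟨k, hEK hk⟩) (norm_nonneg x)
  set I : ℝ := ∫ k, g k ∂μ with hI
  have hInonneg : 0 ≤ I := integral_nonneg hgnonneg
  -- I ≤ M
  have hIleM : I ≤ M := by
    have := integral_mono_ae hIntg (integrable_const M)
      (haeE.mono fun k hk => hle k hk)
    simpa using this
  -- M ≤ I
  have hMleI : M ≤ I := by
    rw [← hM]
    refine ContinuousLinearMap.opNorm_le_bound _ hInonneg fun x => ?_
    have h1 : (toStrongDual x₀) x = ∫ k, k x ∂μ := hbary x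
    rw [h1]
    calc ‖∫ k, k x ∂μ‖ ≤ ∫ k, ‖k x‖ ∂μ := norm_integral_le_integral_norm _
      _ ≤ ∫ k, g k * ‖x‖ ∂μ := by
          refine integral_mono ((hInt_eval x).norm) (hIntg.mul_const ‖x‖) fun k => ?_
          exact (toStrongDual k).le_opNorm x
      _ = I * ‖x‖ := by rw [integral_mul_const]
  have hIeqM : I = M := le_antisymm hIleM hMleI
  -- conclude a.e. equality
  have hzero : ∫ k, (M - g k) ∂μ = 0 := by
    rw [integral_sub (integrable_const M) hIntg, ← hI, hIeqM]
    simp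
  have hae0 : (fun k => M - g k) =ᵐ[μ] 0 := by
    have hnn : 0 ≤ᵐ[μ] fun k => M - g k := by
      filter_upwards [haeE] with k hk
      simpa using hle k hk
    exact (integral_eq_zero_iff_of_nonneg_ae hnn ((integrable_const M).sub hIntg)).1 hzero
  have h1 : ∀ᵐ k ∂μ, k ∈ E → ‖toStrongDual k‖ = M := by
    filter_upwards [hae0] with k hk _
    have : M - g k = 0 := hk
    linarith [this]
  refine ⟨h1, ?_⟩
  obtain ⟨k, hk1, hk2⟩ := (h1.and haeE).exists
  exact ⟨k, hk2, hk1 hk2⟩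
end
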